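/- arXiv:1810.09275 — 15 statements merged into one kernel-verified Lean document; each statement's English description precedes it below -/
import Mathlib

section
/- Let X be a nonempty set and let (X, 𝓑₁) and (X, 𝓑₂) be ball spaces on X. If both (X, 𝓑₁) and (X, 𝓑₂) are spherically complete, then the ball space (X, 𝓑₁ ∪ 𝓑₂) is spherically complete. -/
open Set

/-- A ball space structure on `X`: a nonempty collection of nonempty subsets of `X`. -/
def IsBallSpace {X : Type*} (B : Set (Set X)) : Prop :=
  B.Nonempty ∧ ∀ b ∈ B, b.Nonempty

/-- A nest of balls in `B`: a nonempty subfamily of `B` totally ordered by inclusion. -/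
def IsNest {X : Type*} (B N : Set (Set X)) : Prop :=
  N.Nonempty ∧ N ⊆ B ∧ IsChain (· ⊆ ·) N

/-- Spherical completeness: every nest of balls has nonempty intersection. -/
def SphComplete {X : Type*} (B : Set (Set X)) : Prop :=
  ∀ N, IsNest B N → (⋂₀ N).Nonempty

theorem union_sphComplete {X : Type*} [Nonempty X] (B1 B2 : Set (Set X))
    (hB1 : IsBallSpace B1) (hB2 : IsBallSpace B2)
    (h1 : SphComplete B1) (h2 : SphComplete B2) :
    SphComplete (B1 ∪ B2) := by
  rintro N ⟨hNne, hNsub, hNchain⟩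
  by_cases hco : ∀ b ∈ N, ∃ a ∈ N ∩ B1, a ⊆ b
  · -- N ∩ B1 is coinitial in N
    obtain ⟨b0, hb0⟩ := hNne
    obtain ⟨a0, ha0, _⟩ := hco b0 hb0
    obtain ⟨x, hx⟩ := h1 (N ∩ B1) ⟨⟨a0, ha0⟩, inter_subset_right,
      hNchain.mono inter_subset_left⟩
    refine ⟨x, ?_⟩
    intro b hb
    obtain ⟨a, haN, hab⟩ := hco b hb
    exact hab (hx a haN)
  · push_neg at hco
    obtain ⟨b, hbN, hb⟩ := hco
    -- b is below every element of N ∩ B1; consider M = {c ∈ N | c ⊆ b} ⊆ B2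
    set M : Set (Set X) := {c ∈ N | c ⊆ b} with hM
    have hMB2 : M ⊆ B2 := by
      rintro c ⟨hcN, hcb⟩
      rcases hNsub hcN with h | h
      · exact absurd hcb (hb c ⟨hcN, h⟩)
      · exact h
    obtain ⟨x, hx⟩ := h2 M ⟨⟨b, hbN, subset_rfl⟩, hMB2,
      hNchain.mono fun c hc => hc.1⟩
    refine ⟨x, ?_⟩
    intro d hdN
    rcases eq_or_ne d b with rfl | hne
    · exact hx d ⟨hdN, subset_rfl⟩
    · rcases hNchain hdN hbN hne with h | h
      · exact hx d ⟨hdN, h⟩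
      · exact h (hx b ⟨hbN, subset_rfl⟩)
end

section
/- Let X be a nonempty set and let (X, 𝓑₁) and (X, 𝓑₂) be ball spaces on X. If both (X, 𝓑₁) and (X, 𝓑₂) satisfy S₂, then the ball space (X, 𝓑₁ ∪ 𝓑₂) satisfies S₂. -/
open Set

/-- S₂: the intersection of every nest of balls contains a ball. -/
def S2 {X : Type*} (B : Set (Set X)) : Prop :=
  ∀ N, IsNest B N → ∃ b ∈ B, b ⊆ ⋂₀ N

theorem union_S2 {X : Type*} [Nonempty X] (B1 B2 : Set (Set X))
    (hB1 : IsBallSpace B1) (hB2 : IsBallSpace B2)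
    (h1 : S2 B1) (h2 : S2 B2) :
    S2 (B1 ∪ B2) := by
  rintro N ⟨hNne, hNsub, hNchain⟩
  set N1 := N ∩ B1 with hN1
  set N2 := N ∩ B2 with hN2
  have hchain1 : IsChain (· ⊆ ·) N1 := hNchain.mono (inter_subset_left)
  have hchain2 : IsChain (· ⊆ ·) N2 := hNchain.mono (inter_subset_left)
  have hsplit : ∀ b ∈ N, b ∈ N1 ∨ b ∈ N2 := by
    intro b hb
    rcases hNsub hb with h | h
    · exact Or.inl ⟨hb, h⟩
    · exact Or.inr ⟨hb, h⟩
  by_cases hN1ne : N1.Nonempty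
  · by_cases hN2ne : N2.Nonempty
    · by_cases hkey : ∀ b1 ∈ N1, ∃ b2 ∈ N2, b2 ⊆ b1
      · -- ⋂₀ N2 ⊆ ⋂₀ N1, so ⋂₀ N = ⋂₀ N2 essentially
        obtain ⟨b, hbB2, hb⟩ := h2 N2 ⟨hN2ne, inter_subset_right, hchain2⟩
        refine ⟨b, Or.inr hbB2, ?_⟩
        intro x hx
        simp only [mem_sInter] at *
        intro t ht
        rcases hsplit t ht with h | h
        · obtain ⟨b2, hb2, hsub⟩ := hkey t h
          exact hsub (hb hx b2 hb2)
        · exact hb hx t h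
      · push_neg at hkey
        obtain ⟨b1, hb1, hkey⟩ := hkey
        have hup : ∀ b2 ∈ N2, b1 ⊆ b2 := by
          intro b2 hb2
          rcases eq_or_ne b1 b2 with rfl | hne
          · exact subset_rfl
          · rcases hNchain hb1.1 hb2.1 hne with h | h
            · exact h
            · exact absurd h (hkey b2 hb2)
        obtain ⟨b, hbB1, hb⟩ := h1 N1 ⟨hN1ne, inter_subset_right, hchain1⟩
        refine ⟨b, Or.inl hbB1, ?_⟩
        intro x hx
        simp only [mem_sInter] at *
        intro t ht
        rcases hsplit t ht with h | h
        · exact hb hx t h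
        · exact hup t h (hb hx b1 hb1)
    · -- N ⊆ B1
      have : N = N1 := by
        apply Subset.antisymm
        · intro b hb
          rcases hsplit b hb with h | h
          · exact h
          · exact absurd ⟨b, h⟩ hN2ne
        · exact inter_subset_left
      obtain ⟨b, hbB1, hb⟩ := h1 N1 ⟨this ▸ hNne, inter_subset_right, hchain1⟩
      exact ⟨b, Or.inl hbB1, this ▸ hb⟩
  · have : N = N2 := by
      apply Subset.antisymm
      · intro b hb
        rcases hsplit b hb with h | h
        · exact absurd ⟨b, h⟩ hN1ne
        · exact h
      · exact inter_subset_left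
    obtain ⟨b, hbB2, hb⟩ := h2 N2 ⟨this ▸ hNne, inter_subset_right, hchain2⟩
    exact ⟨b, Or.inr hbB2, this ▸ hb⟩
end

section
/- Let X be a nonempty set and let (X, 𝓑₁) and (X, 𝓑₂) be ball spaces on X. If both (X, 𝓑₁) and (X, 𝓑₂) satisfy S₄, then the ball space (X, 𝓑₁ ∪ 𝓑₂) satisfies S₄. -/
open Set

/-- S₄: the intersection of every nest of balls is itself a ball. -/
def S4 {X : Type*} (B : Set (Set X)) : Prop :=
  ∀ N, IsNest B N → ⋂₀ N ∈ B

lemma coinitial_sInter {X : Type*} (B : Set (Set X)) (hS : S4 B) (N : Set (Set X))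
    (hN : IsChain (· ⊆ ·) N) (hne : N.Nonempty)
    (hco : ∀ b ∈ N, ∃ c ∈ N ∩ B, c ⊆ b) : ⋂₀ N ∈ B := by
  obtain ⟨b, hb⟩ := hne
  obtain ⟨c, hc, _⟩ := hco b hb
  have heq : ⋂₀ (N ∩ B) = ⋂₀ N := by
    apply subset_antisymm
    · intro x hx d hd
      obtain ⟨c, hc, hcd⟩ := hco d hd
      exact hcd (hx c hc)
    · exact sInter_subset_sInter inter_subset_left
  rw [← heq]
  exact hS _ ⟨⟨c, hc⟩, inter_subset_right, hN.mono inter_subset_left⟩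

theorem union_S4 {X : Type*} [Nonempty X] (B1 B2 : Set (Set X))
    (hB1 : IsBallSpace B1) (hB2 : IsBallSpace B2)
    (h1 : S4 B1) (h2 : S4 B2) :
    S4 (B1 ∪ B2) := by
  rintro N ⟨hne, hsub, hchain⟩
  by_cases hco : ∀ b ∈ N, ∃ c ∈ N ∩ B1, c ⊆ b
  · exact Or.inl (coinitial_sInter B1 h1 N hchain hne hco)
  · push_neg at hco
    obtain ⟨b, hbN, hb⟩ := hco
    refine Or.inr (coinitial_sInter B2 h2 N hchain hne ?_)
    intro d hd
    have hbd : b ⊆ d ∨ d ⊆ b := by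
      rcases eq_or_ne b d with rfl | hne'
      · exact Or.inl subset_rfl
      · exact hchain hbN hd hne'
    rcases hbd with hbd | hdb
    · have : b ∈ B2 := by
        rcases hsub hbN with h | h
        · exact absurd subset_rfl (hb b ⟨hbN, h⟩)
        · exact h
      exact ⟨b, ⟨hbN, this⟩, hbd⟩
    · have : d ∈ B2 := by
        rcases hsub hd with h | h
        · exact absurd hdb (hb d ⟨hd, h⟩)
        · exact h
      exact ⟨d, ⟨hd, this⟩, subset_rfl⟩
end

section
/- Let (X, 𝓑) be a ball space and let 𝓢 be a maximal centered system of balls in f-un(𝓑), i.e., a centered system in f-un(𝓑) such that no centered system in f-un(𝓑) properly contains 𝓢. Then there exists a subset 𝓢₀ of 𝓢 with 𝓢₀ ⊆ 𝓑 such that 𝓢₀ is a centered system in 𝓑 and ⋂𝓢₀ = ⋂𝓢. -/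
open Set

/-- A centered system of balls in `B`: a nonempty subfamily of `B` such that any
finitely many (at least one) of its members have nonempty intersection. -/
def IsCentered {X : Type*} (B S : Set (Set X)) : Prop :=
  S.Nonempty ∧ S ⊆ B ∧
    ∀ F : Finset (Set X), F.Nonempty → ↑F ⊆ S → (⋂₀ (↑F : Set (Set X))).Nonempty

/-- `finUnions B` is the collection of all unions of finitely many (at least one) balls of `B`. -/
def finUnions {X : Type*} (B : Set (Set X)) : Set (Set X) :=
  { S | ∃ F : Finset (Set X), F.Nonempty ∧ ↑F ⊆ B ∧ S = ⋃₀ (↑F : Set (Set X)) }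

theorem maximal_centered_finUnions {X : Type*} [Nonempty X] (B : Set (Set X))
    (hB : IsBallSpace B) (S : Set (Set X))
    (hS : IsCentered (finUnions B) S)
    (hmax : ∀ T : Set (Set X), IsCentered (finUnions B) T → S ⊆ T → T = S) :
    ∃ S₀ ⊆ S, S₀ ⊆ B ∧ IsCentered B S₀ ∧ ⋂₀ S₀ = ⋂₀ S := by
  obtain ⟨hSne, hSsub, hScent⟩ := hS
  -- Key claim: every member of S contains a ball of B that belongs to S.
  have key : ∀ U ∈ S, ∃ b, b ∈ B ∧ b ∈ S ∧ b ⊆ U := by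
    intro U hU
    obtain ⟨G, hGne, hGB, hGU⟩ := hSsub hU
    -- find a ball b ∈ G meeting all finite intersections from S
    have hb : ∃ b ∈ G, ∀ F : Finset (Set X), F.Nonempty → ↑F ⊆ S →
        ((⋂₀ (↑F : Set (Set X))) ∩ b).Nonempty := by
      by_contra hcon
      push_neg at hcon
      choose Fb hFbne hFbS hFbe using hcon
      classical
      set F' : Finset (Set X) :=
        insert U (G.attach.biUnion (fun b => Fb b.1 b.2)) with hF'
      have hF'ne : F'.Nonempty := ⟨U, Finset.mem_insert_self _ _⟩
      have hF'S : ↑F' ⊆ S := by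
        intro x hx
        rw [Finset.mem_coe, hF', Finset.mem_insert] at hx
        rcases hx with rfl | hx
        · exact hU
        · obtain ⟨b, _, hxb⟩ := Finset.mem_biUnion.mp hx
          exact hFbS b.1 b.2 hxb
      obtain ⟨x, hx⟩ := hScent F' hF'ne hF'S
      have hxU : x ∈ U := hx U (by simp [hF'])
      rw [hGU] at hxU
      obtain ⟨b, hbG, hxb⟩ := hxU
      have hxF : x ∈ ⋂₀ (↑(Fb b hbG) : Set (Set X)) := by
        intro t ht
        apply hx
        rw [Finset.mem_coe, hF']
        exact Finset.mem_insert_of_mem (Finset.mem_biUnion.mpr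
          ⟨⟨b, hbG⟩, Finset.mem_attach _ _, ht⟩)
      have : x ∈ (⋂₀ (↑(Fb b hbG) : Set (Set X))) ∩ b := ⟨hxF, hxb⟩
      rw [hFbe b hbG] at this
      exact this
    obtain ⟨b, hbG, hbmeet⟩ := hb
    have hbB : b ∈ B := hGB hbG
    -- insert b S is centered, hence equals S
    have hins : IsCentered (finUnions B) (insert b S) := by
      refine ⟨⟨b, mem_insert _ _⟩, ?_, ?_⟩
      · intro t ht
        rcases ht with rfl | ht
        · exact ⟨{t}, ⟨t, Finset.mem_singleton_self t⟩, by simpa using hbB, by simp⟩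
        · exact hSsub ht
      · intro F hFne hFS
        classical
        by_cases hbF : b ∈ F
        · rcases Finset.eq_empty_or_nonempty (F.erase b) with he | hne
          · have : F = {b} := by
              apply Finset.eq_singleton_iff_unique_mem.mpr
              refine ⟨hbF, fun y hy => ?_⟩
              by_contra hyb
              exact Finset.notMem_empty y (he ▸ Finset.mem_erase.mpr ⟨hyb, hy⟩)
            rw [this]
            simpa using hB.2 b hbB
          · have hsub : ↑(F.erase b) ⊆ S := by
              intro t ht
              rcases Finset.mem_erase.mp ht with ⟨htb, htF⟩
              rcases hFS htF with rfl | hts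
              · exact absurd rfl htb
              · exact hts
            have := hbmeet (F.erase b) hne hsub
            have hFeq : (F : Set (Set X)) = insert b ↑(F.erase b) := by
              rw [← Finset.coe_insert, Finset.insert_erase hbF]
            rw [hFeq, sInter_insert]
            rw [Set.inter_comm] at this
            exact this
        · apply hScent F hFne
          intro t ht
          rcases hFS ht with rfl | hts
          · exact absurd ht hbF
          · exact hts
    have heq : insert b S = S := hmax _ hins (subset_insert _ _)
    have hbS : b ∈ S := heq ▸ mem_insert b S
    refine ⟨b, hbB, hbS, ?_⟩
    rw [hGU]
    exact fun x hx => ⟨b, hbG, hx⟩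
  -- Take S₀ = S ∩ B
  refine ⟨S ∩ B, inter_subset_left, inter_subset_right, ⟨?_, inter_subset_right, ?_⟩, ?_⟩
  · obtain ⟨U, hU⟩ := hSne
    obtain ⟨b, hbB, hbS, _⟩ := key U hU
    exact ⟨b, hbS, hbB⟩
  · intro F hFne hFS
    exact hScent F hFne (fun t ht => (hFS ht).1)
  · apply Set.Subset.antisymm
    · intro x hx U hU
      obtain ⟨b, hbB, hbS, hbU⟩ := key U hU
      exact hbU (hx b ⟨hbS, hbB⟩)
    · exact sInter_subset_sInter inter_subset_left
end

section
/- Let (X, 𝓑) be a ball space satisfying S₁ᶜ, i.e., every centered system of balls in 𝓑 has nonempty intersection. Then the ball space (X, f-un(𝓑)) also satisfies S₁ᶜ: every centered system of balls in f-un(𝓑) has nonempty intersection. -/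
open Set

/-- S₁ᶜ: every centered system of balls has nonempty intersection. -/
def S1c {X : Type*} (B : Set (Set X)) : Prop :=
  ∀ S, IsCentered B S → (⋂₀ S).Nonempty

theorem finUnions_S1c {X : Type*} [Nonempty X] (B : Set (Set X))
    (hB : IsBallSpace B) (h : S1c B) : S1c (finUnions B) := by
  intro S hS
  obtain ⟨hSne, hSsub, hScent⟩ := hS
  -- the filter generated by S is proper
  have hne : (Filter.generate S).NeBot := by
    rw [Filter.generate_neBot_iff]
    intro t hts htfin
    rcases t.eq_empty_or_nonempty with rfl | htne
    · simp
    · have := hScent htfin.toFinset (by simpa using htne) (by simpa using hts)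
      simpa using this
  -- extend to an ultrafilter
  let U := Ultrafilter.of (Filter.generate S)
  have hUle : (U : Filter X) ≤ Filter.generate S := Ultrafilter.of_le _
  have hSU : ∀ s ∈ S, s ∈ U := fun s hs =>
    hUle (Filter.GenerateSets.basic hs)
  -- the balls of B in U
  set T : Set (Set X) := {b | b ∈ B ∧ b ∈ U} with hT
  -- each s ∈ S contains a member of T
  have hpick : ∀ s ∈ S, ∃ b ∈ T, b ⊆ s := by
    intro s hs
    obtain ⟨F, hFne, hFB, rfl⟩ := hSsub hs
    have : ⋃₀ (↑F : Set (Set X)) ∈ U := hSU _ hs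
    rw [Ultrafilter.finite_sUnion_mem_iff (F.finite_toSet)] at this
    obtain ⟨b, hbF, hbU⟩ := this
    exact ⟨b, ⟨hFB hbF, hbU⟩, fun x hx => ⟨b, hbF, hx⟩⟩
  -- T is centered
  have hTcent : IsCentered B T := by
    refine ⟨?_, fun b hb => hb.1, ?_⟩
    · obtain ⟨s, hs⟩ := hSne
      obtain ⟨b, hb, _⟩ := hpick s hs
      exact ⟨b, hb⟩
    · intro F hFne hFT
      have hFU : ⋂₀ (↑F : Set (Set X)) ∈ U := by
        exact (Filter.sInter_mem F.finite_toSet).2 fun b hb => (hFT hb).2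
      exact Ultrafilter.nonempty_of_mem hFU
  obtain ⟨x, hx⟩ := h T hTcent
  refine ⟨x, ?_⟩
  intro s hs
  obtain ⟨b, hb, hbs⟩ := hpick s hs
  exact hbs (hx b hb)
end

section
/- For i ∈ ℕ let pᵢ denote the i-th prime number and define Bᵢ ⊆ ℝ by Bᵢ := (0, 1/pᵢ) \ { 1/pᵢʲ : j ∈ ℕ, pᵢʲ > pᵢ₊₁ }, and set 𝓑 := { Bᵢ : i ∈ ℕ }. Then (ℝ, 𝓑) is a spherically complete ball space (indeed, for i ≠ j the balls Bᵢ and Bⱼ are incomparable under inclusion, so every nest consists of a single ball), but the ball space (ℝ, f-un(𝓑)) is not spherically complete: the sets Bᵢ ∪ Bᵢ₊₁ = (0, 1/pᵢ) form a nest in f-un(𝓑) with empty intersection. -/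
open Set

/-- The `i`-th prime number. -/
noncomputable def pp (i : ℕ) : ℕ := Nat.nth Nat.Prime i

/-- `Bex i = (0, 1/pᵢ) \ { 1/pᵢʲ : j ∈ ℕ, pᵢʲ > pᵢ₊₁ }`. -/
noncomputable def Bex (i : ℕ) : Set ℝ :=
  Ioo (0 : ℝ) (1 / (pp i : ℝ)) \
    { x : ℝ | ∃ j : ℕ, ((pp i : ℝ)) ^ j > (pp (i + 1) : ℝ) ∧ x = 1 / ((pp i : ℝ)) ^ j }

lemma pp_prime (i : ℕ) : (pp i).Prime := Nat.prime_nth_prime i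
lemma pp_two_le (i : ℕ) : 2 ≤ pp i := (pp_prime i).two_le
lemma pp_strictMono : StrictMono pp :=
  fun _ _ h => (Nat.nth_lt_nth Nat.infinite_setOf_prime).mpr h
lemma pp_pos (i : ℕ) : (0:ℝ) < pp i := by exact_mod_cast (pp_prime i).pos

lemma pow_ne_pow {i j a b : ℕ} (hij : i ≠ j) (ha : 1 ≤ a) : (pp i)^a ≠ (pp j)^b := by
  intro h
  rcases Nat.eq_zero_or_pos b with hb | hb
  · subst hb
    simp only [pow_zero] at h
    have := pp_two_le i
    have : 2 ≤ (pp i)^a := le_trans this (Nat.le_self_pow (by omega) _)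
    omega
  · have hd : pp i ∣ (pp j)^b := h ▸ dvd_pow_self _ (by omega)
    have := (Nat.Prime.dvd_of_dvd_pow (pp_prime i) hd)
    have heq : pp i = pp j := ((Nat.prime_dvd_prime_iff_eq (pp_prime i) (pp_prime j)).mp this)
    exact hij (pp_strictMono.injective heq)

/-- membership of `1/(pp j)^m` in `Bex i` for `i ≠ j`, `m ≥ 1`, `pp i < (pp j)^m`. -/
lemma mem_Bex_pow {i j m : ℕ} (hij : i ≠ j) (hm : 1 ≤ m) (h2 : pp i < (pp j)^m) :
    (1 / ((pp j : ℝ))^m) ∈ Bex i := by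
  have hp : (0:ℝ) < ((pp j:ℝ))^m := pow_pos (pp_pos j) m
  constructor
  · constructor
    · positivity
    · apply one_div_lt_one_div_of_lt (pp_pos i)
      exact_mod_cast h2
  · rintro ⟨k, hk, heq⟩
    have hk1 : 1 ≤ k := by
      by_contra h
      have : k = 0 := by omega
      subst this
      simp only [pow_zero] at hk
      have : (2:ℝ) ≤ pp (i+1) := by exact_mod_cast pp_two_le (i+1)
      linarith
    have hne1 : ((pp j:ℝ))^m ≠ 0 := hp.ne'
    have hne2 : ((pp i:ℝ))^k ≠ 0 := (pow_pos (pp_pos i) k).ne'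
    rw [div_eq_div_iff hne1 hne2] at heq
    have : (pp i)^k = (pp j)^m := by
      have : ((pp i:ℝ))^k = ((pp j:ℝ))^m := by linarith
      exact_mod_cast this
    exact pow_ne_pow hij hk1 this

lemma not_subset_of_lt {i j : ℕ} (h : i < j) : ¬ Bex i ⊆ Bex j := by
  intro hsub
  have hmem : (1 / ((pp j : ℝ))^1) ∈ Bex i := by
    apply mem_Bex_pow (Nat.ne_of_lt h) le_rfl
    rw [pow_one]; exact pp_strictMono h
  have := (hsub hmem).1.2
  rw [pow_one] at this
  exact lt_irrefl _ this

lemma not_subset_of_gt {i j : ℕ} (h : j < i) : ¬ Bex i ⊆ Bex j := by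
  intro hsub
  set m := pp i with hm
  have hlt : pp i < (pp j)^m := lt_of_lt_of_le (Nat.lt_pow_self (n := pp i) (pp_two_le j))
    (Nat.pow_le_pow_left le_rfl _)
  have hmem : (1 / ((pp j : ℝ))^m) ∈ Bex i :=
    mem_Bex_pow (Nat.ne_of_gt h) (le_trans (by norm_num) (pp_two_le i)) hlt
  have := (hsub hmem).2
  apply this
  refine ⟨m, ?_, rfl⟩
  have h1 : pp (j+1) ≤ pp i := pp_strictMono.monotone (by omega)
  have : pp (j+1) < (pp j)^m := lt_of_le_of_lt h1 hlt
  exact_mod_cast this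

lemma Bex_nonempty (i : ℕ) : (Bex i).Nonempty := by
  refine ⟨1 / ((pp (i+1) : ℝ))^1, ?_⟩
  apply mem_Bex_pow (by omega) le_rfl
  rw [pow_one]; exact pp_strictMono (by omega)

lemma Bex_union (i : ℕ) : Bex i ∪ Bex (i + 1) = Ioo (0 : ℝ) (1 / (pp i : ℝ)) := by
  ext x
  constructor
  · rintro (⟨h1, _⟩ | ⟨⟨h1, h2⟩, _⟩)
    · exact h1
    · refine ⟨h1, lt_trans h2 ?_⟩
      apply one_div_lt_one_div_of_lt (pp_pos i)
      exact_mod_cast pp_strictMono (Nat.lt_succ_self i)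
  · intro hx
    by_cases hr : x ∈ { y : ℝ | ∃ k : ℕ, ((pp i : ℝ)) ^ k > (pp (i + 1) : ℝ) ∧ y = 1 / ((pp i : ℝ)) ^ k }
    · right
      obtain ⟨k, hk, hxe⟩ := hr
      subst hxe
      apply mem_Bex_pow (by omega) ?_ ?_
      · by_contra h
        have : k = 0 := by omega
        subst this
        simp only [pow_zero] at hk
        have : (2:ℝ) ≤ pp (i+1) := by exact_mod_cast pp_two_le (i+1)
        linarith
      · exact_mod_cast hk
    · exact Or.inl ⟨hx, hr⟩

lemma sInter_empty_aux : ⋂₀ { S : Set ℝ | ∃ i : ℕ, S = Bex i ∪ Bex (i + 1) } = ∅ := by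
  ext x
  simp only [mem_sInter, mem_setOf_eq, mem_empty_iff_false, iff_false, not_forall]
  by_cases hx : ∀ i : ℕ, x ∈ Ioo (0:ℝ) (1 / (pp i : ℝ))
  · exfalso
    have hx0 : 0 < x := (hx 0).1
    obtain ⟨n, hn⟩ := exists_nat_gt (1 / x)
    have hn0 : (0:ℝ) < n := lt_trans (by positivity) hn
    have h1 : 1 / (n:ℝ) < x := by
      rw [div_lt_iff₀ hn0]
      rw [div_lt_iff₀ hx0] at hn
      linarith [hn]
    have h2 : x < 1 / (pp n : ℝ) := (hx n).2
    have h3 : (n:ℝ) ≤ pp n := by exact_mod_cast pp_strictMono.le_apply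
    have h4 : 1 / ((pp n : ℝ)) ≤ 1 / (n:ℝ) := one_div_le_one_div_of_le hn0 h3
    linarith
  · push_neg at hx
    obtain ⟨i, hi⟩ := hx
    exact ⟨Bex i ∪ Bex (i+1), ⟨i, rfl⟩, by rw [Bex_union]; exact hi⟩

lemma isNest_aux : IsNest (finUnions { S : Set ℝ | ∃ i : ℕ, S = Bex i })
    { S : Set ℝ | ∃ i : ℕ, S = Bex i ∪ Bex (i + 1) } := by
  classical
  refine ⟨⟨Bex 0 ∪ Bex 1, ⟨0, rfl⟩⟩, ?_, ?_⟩
  · rintro S ⟨i, rfl⟩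
    refine ⟨{Bex i, Bex (i+1)}, ⟨Bex i, by simp⟩, ?_, ?_⟩
    · intro T hT
      simp only [Finset.coe_insert, Finset.coe_singleton, mem_insert_iff, mem_singleton_iff] at hT
      rcases hT with rfl | rfl
      · exact ⟨i, rfl⟩
      · exact ⟨i+1, rfl⟩
    · simp [Set.sUnion_insert, Set.sUnion_singleton]
  · rintro S ⟨i, rfl⟩ T ⟨j, rfl⟩ _
    rw [Bex_union, Bex_union]
    rcases le_total i j with h | h
    · right
      apply Ioo_subset_Ioo_right
      apply one_div_le_one_div_of_le (pp_pos i)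
      exact_mod_cast pp_strictMono.monotone h
    · left
      apply Ioo_subset_Ioo_right
      apply one_div_le_one_div_of_le (pp_pos j)
      exact_mod_cast pp_strictMono.monotone h

theorem finUnions_not_sphComplete_example :
    SphComplete { S : Set ℝ | ∃ i : ℕ, S = Bex i } ∧
    (∀ i j : ℕ, i ≠ j → ¬ Bex i ⊆ Bex j) ∧
    (∀ i : ℕ, Bex i ∪ Bex (i + 1) = Ioo (0 : ℝ) (1 / (pp i : ℝ))) ∧
    IsNest (finUnions { S : Set ℝ | ∃ i : ℕ, S = Bex i })
      { S : Set ℝ | ∃ i : ℕ, S = Bex i ∪ Bex (i + 1) } ∧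
    ⋂₀ { S : Set ℝ | ∃ i : ℕ, S = Bex i ∪ Bex (i + 1) } = ∅ ∧
    ¬ SphComplete (finUnions { S : Set ℝ | ∃ i : ℕ, S = Bex i }) := by
  have incomp : ∀ i j : ℕ, i ≠ j → ¬ Bex i ⊆ Bex j := by
    intro i j hij
    rcases lt_or_gt_of_ne hij with h | h
    · exact not_subset_of_lt h
    · exact not_subset_of_gt h
  refine ⟨?_, incomp, Bex_union, isNest_aux, sInter_empty_aux, ?_⟩
  · rintro N ⟨⟨S, hS⟩, hsub, hchain⟩
    obtain ⟨i, rfl⟩ := hsub hS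
    have hall : ∀ T ∈ N, T = Bex i := by
      intro T hT
      obtain ⟨j, rfl⟩ := hsub hT
      by_cases hij : j = i
      · rw [hij]
      · rcases hchain hT hS (fun h => hij (by
          obtain (h' | h') := lt_or_gt_of_ne hij
          · exact absurd h.le (by exact fun hle => (not_subset_of_lt h') (h ▸ hle))
          · exact absurd h.le (fun hle => (not_subset_of_gt h') (h ▸ hle)))) with h | h
        · exact absurd h (incomp j i hij)
        · exact absurd h (incomp i j (Ne.symm hij))
    obtain ⟨x, hx⟩ := Bex_nonempty i
    exact ⟨x, fun T hT => (hall T hT) ▸ hx⟩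
  · intro h
    have := h _ isNest_aux
    rw [sInter_empty_aux] at this
    exact Set.not_nonempty_empty this
end

section
/- Let (X, 𝓑) and (X', 𝓑') be ball spaces and let f : X → X' be ball continuous. If (X, 𝓑) is spherically complete, then (X', 𝓑') is spherically complete. -/
open Set

/-- Ball continuity: preimages of balls are balls. -/
def BallContinuous {X X' : Type*} (B : Set (Set X)) (B' : Set (Set X')) (f : X → X') : Prop :=
  ∀ b' ∈ B', f ⁻¹' b' ∈ B

theorem ballContinuous_sphComplete {X X' : Type*} (B : Set (Set X)) (B' : Set (Set X'))
    (hB : IsBallSpace B) (hB' : IsBallSpace B') (f : X → X')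
    (hf : BallContinuous B B' f) (h : SphComplete B) : SphComplete B' := by
  intro N' hN'
  obtain ⟨⟨b0, hb0⟩, hsub, hchain⟩ := hN'
  set N : Set (Set X) := (fun b => f ⁻¹' b) '' N' with hN
  obtain ⟨x, hx⟩ := h N ⟨⟨f ⁻¹' b0, ⟨b0, hb0, rfl⟩⟩,
    fun s ⟨b, hb, hbs⟩ => hbs ▸ hf b (hsub hb),
    fun s ⟨b, hb, hbs⟩ t ⟨c, hc, hct⟩ hst => by
      rcases hchain.total hb hc with h1 | h1
      · exact Or.inl (hbs ▸ hct ▸ preimage_mono h1)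
      · exact Or.inr (hbs ▸ hct ▸ preimage_mono h1)⟩
  refine ⟨f x, fun b hb => ?_⟩
  exact hx (f ⁻¹' b) ⟨b, hb, rfl⟩
end

section
/- Let (X, 𝓑) and (X', 𝓑') be ball spaces and let f : X → X' be a surjective function such that every ball in 𝓑 is the preimage under f of some ball in 𝓑', i.e., 𝓑 ⊆ { f⁻¹(B') : B' ∈ 𝓑' }. If (X', 𝓑') is spherically complete, then (X, 𝓑) is spherically complete. -/
open Set

theorem preimage_sphComplete {X X' : Type*} (B : Set (Set X)) (B' : Set (Set X'))
    (hB : IsBallSpace B) (hB' : IsBallSpace B') (f : X → X')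
    (hsurj : Function.Surjective f)
    (hf : B ⊆ { S | ∃ b' ∈ B', S = f ⁻¹' b' })
    (h : SphComplete B') : SphComplete B := by
  intro N ⟨hNne, hNB, hNchain⟩
  set N' : Set (Set X') := {b' ∈ B' | f ⁻¹' b' ∈ N} with hN'
  have hnest : IsNest B' N' := by
    refine ⟨?_, fun b' hb' => hb'.1, ?_⟩
    · obtain ⟨b, hb⟩ := hNne
      obtain ⟨b', hb'B, rfl⟩ := hf (hNB hb)
      exact ⟨b', hb'B, hb⟩
    · intro a ha b hb hne
      rcases hNchain (ha.2) (hb.2) (fun hc => hne (by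
        have := congrArg (Set.image f) hc
        rwa [Set.image_preimage_eq _ hsurj, Set.image_preimage_eq _ hsurj] at this)) with hab | hba
      · left; intro x hx
        obtain ⟨y, hy⟩ := hsurj x
        have : y ∈ f ⁻¹' a := by simp [Set.mem_preimage, hy, hx]
        have := hab this
        simpa [Set.mem_preimage, hy] using this
      · right; intro x hx
        obtain ⟨y, hy⟩ := hsurj x
        have : y ∈ f ⁻¹' b := by simp [Set.mem_preimage, hy, hx]
        have := hba this
        simpa [Set.mem_preimage, hy] using this
  obtain ⟨x', hx'⟩ := h N' hnest
  obtain ⟨x, rfl⟩ := hsurj x'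
  refine ⟨x, ?_⟩
  intro b hb
  obtain ⟨b', hb'B, rfl⟩ := hf (hNB hb)
  exact hx' b' ⟨hb'B, hb⟩
end

section
/- Let (X, 𝓑) and (X', 𝓑') be ball spaces and let f : X → X' be ball closed (the image f(B) of every ball B ∈ 𝓑 belongs to 𝓑') and finite-to-one (for every x' ∈ X' the fiber f⁻¹({x'}) is finite). If (X', 𝓑') is spherically complete, then (X, 𝓑) is spherically complete. -/
open Set

theorem ballClosed_finiteToOne_sphComplete {X X' : Type*}
    (B : Set (Set X)) (B' : Set (Set X'))
    (hB : IsBallSpace B) (hB' : IsBallSpace B') (f : X → X')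
    (hclosed : ∀ b ∈ B, f '' b ∈ B')
    (hfin : ∀ x' : X', (f ⁻¹' {x'}).Finite)
    (h : SphComplete B') : SphComplete B := by
  rintro N ⟨hNne, hNB, hNchain⟩
  -- image nest
  have hnest' : IsNest B' ((f '' ·) '' N) := by
    refine ⟨hNne.image _, ?_, ?_⟩
    · rintro _ ⟨b, hb, rfl⟩; exact hclosed b (hNB hb)
    · rintro _ ⟨a, ha, rfl⟩ _ ⟨b, hb, rfl⟩ hne
      rcases hNchain.total ha hb with hab | hba
      · exact Or.inl (image_mono hab)
      · exact Or.inr (image_mono hba)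
  obtain ⟨x', hx'⟩ := h _ hnest'
  rw [mem_sInter] at hx'
  set F : Set X := f ⁻¹' {x'} with hF
  -- family of fiber intersections
  set T : Set (Set X) := (fun b => F ∩ b) '' N with hT
  have hTfin : T.Finite := by
    have : T ⊆ {t | t ⊆ F} := by rintro _ ⟨b, hb, rfl⟩; exact inter_subset_left
    exact Finite.subset (hfin x').finite_subsets this
  have hTne : T.Nonempty := hNne.image _
  obtain ⟨m, hmT, hmin⟩ := Set.Finite.exists_minimalFor id T hTfin hTne
  have hmne : ∀ t ∈ T, t.Nonempty := by
    rintro _ ⟨b, hb, rfl⟩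
    obtain ⟨x, hxb, hfx⟩ := hx' _ ⟨b, hb, rfl⟩
    exact ⟨x, hfx, hxb⟩
  have hmsub : ∀ t ∈ T, m ⊆ t := by
    rintro _ ⟨b, hb, rfl⟩
    obtain ⟨a, ha, rfl⟩ := hmT
    rcases hNchain.total ha hb with hab | hba
    · exact inter_subset_inter_right _ hab
    · have := hmin ⟨b, hb, rfl⟩ (inter_subset_inter_right _ hba)
      simp only [id] at this
      exact this
  obtain ⟨y, hy⟩ := hmne m hmT
  refine ⟨y, ?_⟩
  rw [mem_sInter]
  intro b hb
  exact (hmsub _ ⟨b, hb, rfl⟩ hy).2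
end

section
/- Let I be a nonempty index set and let (Yᵢ, 𝓑ᵢ), i ∈ I, be ball spaces. Then the product ball space ∏ᵢ (Yᵢ, 𝓑ᵢ) is spherically complete if and only if every (Yᵢ, 𝓑ᵢ), i ∈ I, is spherically complete. -/
open Set

/-- The balls of the product ball space: the sets `∏ᵢ bᵢ` such that for some `k`,
`bₖ ∈ Bₖ` and `bᵢ = Yᵢ` for all `i ≠ k`. -/
def prodBalls {I : Type*} {Y : I → Type*} (B : ∀ i, Set (Set (Y i))) :
    Set (Set (∀ i, Y i)) :=
  { S | ∃ (b : ∀ i, Set (Y i)) (k : I), b k ∈ B k ∧ (∀ i, i ≠ k → b i = univ) ∧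
      S = { x | ∀ i, x i ∈ b i } }

theorem prod_sphComplete_iff {I : Type*} [Nonempty I] {Y : I → Type*}
    (B : ∀ i, Set (Set (Y i))) (hB : ∀ i, IsBallSpace (B i)) :
    SphComplete (prodBalls B) ↔ ∀ i, SphComplete (B i) := by
  classical
  have hY : ∀ i, Nonempty (Y i) := by
    intro i
    obtain ⟨⟨b, hb⟩, h2⟩ := hB i
    obtain ⟨y, _⟩ := h2 b hb
    exact ⟨y⟩
  constructor
  · -- product spherically complete → each factor is
    intro hprod i N hN
    set cyl : Set (Y i) → Set (∀ j, Y j) :=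
      fun b => {x | ∀ j, x j ∈ Function.update (fun j => (univ : Set (Y j))) i b j} with hcyl
    have hmono : ∀ b c : Set (Y i), b ⊆ c → cyl b ⊆ cyl c := by
      intro b c hbc x hx j
      by_cases hji : j = i
      · subst hji
        simpa using hbc (by simpa using hx j)
      · simp [Function.update_of_ne hji]
    have hM : IsNest (prodBalls B) (cyl '' N) := by
      refine ⟨hN.1.image _, ?_, ?_⟩
      · rintro _ ⟨b, hb, rfl⟩
        exact ⟨Function.update (fun j => (univ : Set (Y j))) i b, i,
          by simpa using hN.2.1 hb, fun j hj => Function.update_of_ne hj _ _, rfl⟩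
      · rintro _ ⟨b, hb, rfl⟩ _ ⟨c, hc, rfl⟩ _
        rcases eq_or_ne b c with rfl | hbc
        · exact Or.inl le_rfl
        · rcases hN.2.2 hb hc hbc with h | h
          · exact Or.inl (hmono _ _ h)
          · exact Or.inr (hmono _ _ h)
    obtain ⟨x, hx⟩ := hprod _ hM
    refine ⟨x i, fun b hb => ?_⟩
    have := hx (cyl b) ⟨b, hb, rfl⟩
    simpa using this i
  · -- each factor spherically complete → product is
    intro hsph N hN
    have hrep := fun S (hS : S ∈ N) => hN.2.1 hS
    choose! bf kf h1 h2 h3 using hrep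
    -- induced nest on coordinate i
    set Ni : ∀ i, Set (Set (Y i)) := fun i => (fun S => bf S i) '' {S ∈ N | kf S = i}
      with hNi
    have hNinest : ∀ i, (Ni i).Nonempty → IsNest (B i) (Ni i) := by
      intro i hne
      refine ⟨hne, ?_, ?_⟩
      · rintro _ ⟨S, ⟨hS, hk⟩, rfl⟩
        subst hk
        exact h1 S hS
      · rintro _ ⟨S, ⟨hS, hkS⟩, rfl⟩ _ ⟨T, ⟨hT, hkT⟩, rfl⟩ hne'
        -- inclusion between S and T gives inclusion of coordinate balls
        have key : ∀ S T : Set (∀ j, Y j), S ∈ N → T ∈ N → kf S = i → kf T = i →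
            S ⊆ T → bf S i ⊆ bf T i := by
          intro S T hS hT hkS hkT hST y hy
          set x : ∀ j, Y j := fun j => if h : j = i then h ▸ y else Classical.arbitrary _
            with hx
          have hxi : x i = y := by simp [hx]
          have hxS : x ∈ S := by
            rw [h3 S hS]
            intro j
            by_cases hji : j = i
            · subst hji; rw [hxi]; exact hy
            · rw [h2 S hS j (hkS ▸ hji)]; trivial
          have := hST hxS
          rw [h3 T hT] at this
          have := this i
          rwa [hxi] at this
        rcases eq_or_ne S T with rfl | hST
        · exact Or.inl le_rfl
        · rcases hN.2.2 hS hT hST with h | h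
          · exact Or.inl (key S T hS hT hkS hkT h)
          · exact Or.inr (key T S hT hS hkT hkS h)
    have hint : ∀ i, (Ni i).Nonempty → (⋂₀ Ni i).Nonempty := fun i hne =>
      hsph i (Ni i) (hNinest i hne)
    set x : ∀ i, Y i := fun i =>
      if h : (Ni i).Nonempty then (hint i h).choose else Classical.arbitrary _ with hxdef
    refine ⟨x, fun S hS => ?_⟩
    rw [h3 S hS]
    intro j
    by_cases hj : j = kf S
    · subst hj
      have hmem : bf S (kf S) ∈ Ni (kf S) := ⟨S, ⟨hS, rfl⟩, rfl⟩
      have hne : (Ni (kf S)).Nonempty := ⟨_, hmem⟩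
      have hx : x (kf S) = (hint (kf S) hne).choose := by simp [hxdef, hne]
      rw [hx]
      exact (hint (kf S) hne).choose_spec _ hmem
    · rw [h2 S hS j hj]; trivial
end

section
/- Let I be a nonempty index set and let (Yᵢ, 𝓑ᵢ), i ∈ I, be ball spaces. If at least one of the ball spaces (Yᵢ, 𝓑ᵢ) is spherically complete, then the coproduct ball space ∐ᵢ (Yᵢ, 𝓑ᵢ) is spherically complete. -/
open Set

/-- The balls of the coproduct ball space on the disjoint union `Σ i, Y i`:
the sets `⋃ᵢ ιᵢ(bᵢ)` with `bᵢ ∈ Bᵢ` for every `i`. -/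
def coprodBalls {I : Type*} {Y : I → Type*} (B : ∀ i, Set (Set (Y i))) :
    Set (Set (Σ i, Y i)) :=
  { S | ∃ b : ∀ i, Set (Y i), (∀ i, b i ∈ B i) ∧ S = { p : Σ i, Y i | p.2 ∈ b p.1 } }

theorem coprod_sphComplete {I : Type*} [Nonempty I] {Y : I → Type*}
    (B : ∀ i, Set (Set (Y i))) (hB : ∀ i, IsBallSpace (B i))
    (k : I) (hk : SphComplete (B k)) :
    SphComplete (coprodBalls B) := by
  rintro N ⟨hNne, hNB, hNchain⟩
  set Nk : Set (Set (Y k)) := (fun S => {y | (⟨k, y⟩ : Σ i, Y i) ∈ S}) '' N with hNkdef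
  have hsub : Nk ⊆ B k := by
    rintro T ⟨S, hS, rfl⟩
    obtain ⟨b, hb, rfl⟩ := hNB hS
    exact hb k
  have hchain : IsChain (· ⊆ ·) Nk := by
    rintro T₁ ⟨S₁, hS₁, rfl⟩ T₂ ⟨S₂, hS₂, rfl⟩ hne
    rcases eq_or_ne S₁ S₂ with rfl | h
    · exact absurd rfl hne
    · rcases hNchain hS₁ hS₂ h with h12 | h21
      · exact Or.inl fun y hy => h12 hy
      · exact Or.inr fun y hy => h21 hy
  obtain ⟨y, hy⟩ := hk Nk ⟨hNne.image _, hsub, hchain⟩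
  refine ⟨⟨k, y⟩, fun S hS => ?_⟩
  exact hy _ ⟨S, hS, rfl⟩
end

section
/- Let I be a nonempty index set and let (Yᵢ, 𝓑ᵢ), i ∈ I, be ball spaces. The following are equivalent: (i) every (Yᵢ, 𝓑ᵢ), i ∈ I, satisfies S₂; (ii) the product ball space ∏ᵢ (Yᵢ, 𝓑ᵢ) satisfies S₂; (iii) the coproduct ball space ∐ᵢ (Yᵢ, 𝓑ᵢ) satisfies S₂. -/
open Set

section Aux

variable {I : Type*} {Y : I → Type*}

lemma mem_prodBalls_iff {B : ∀ i, Set (Set (Y i))} {S : Set (∀ i, Y i)} :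
    S ∈ prodBalls B ↔ ∃ k, ∃ c ∈ B k, S = {x : ∀ i, Y i | x k ∈ c} := by
  classical
  constructor
  · rintro ⟨b, k, hbk, huniv, rfl⟩
    refine ⟨k, b k, hbk, ?_⟩
    ext x
    simp only [mem_setOf_eq]
    constructor
    · exact fun h => h k
    · intro h i
      by_cases hik : i = k
      · subst hik; exact h
      · rw [huniv i hik]; exact mem_univ _
  · rintro ⟨k, c, hc, rfl⟩
    refine ⟨Function.update (fun i => (univ : Set (Y i))) k c, k, by simp [hc],
      fun i hik => by simp [Function.update_of_ne hik], ?_⟩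
    ext x
    simp only [mem_setOf_eq]
    constructor
    · intro h i
      by_cases hik : i = k
      · subst hik; simpa using h
      · simp [Function.update_of_ne hik]
    · intro h
      have := h k
      simpa using this

variable [∀ i, Nonempty (Y i)]

lemma cyl_subset_same {k : I} {c c' : Set (Y k)}
    (h : {x : ∀ i, Y i | x k ∈ c} ⊆ {x : ∀ i, Y i | x k ∈ c'}) : c ⊆ c' := by
  classical
  intro y hy
  have hx : Function.update (Classical.arbitrary (∀ i, Y i)) k y ∈ {x : ∀ i, Y i | x k ∈ c} := by
    simp [hy]
  have := h hx
  simpa using this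

lemma cyl_subset_ne {k k' : I} (hkk : k ≠ k') {c : Set (Y k)} {c' : Set (Y k')}
    (hc : c.Nonempty)
    (h : {x : ∀ i, Y i | x k ∈ c} ⊆ {x : ∀ i, Y i | x k' ∈ c'}) : c' = univ := by
  classical
  ext y
  simp only [mem_univ, iff_true]
  obtain ⟨z, hz⟩ := hc
  have hx : Function.update (Function.update (Classical.arbitrary (∀ i, Y i)) k z) k' y
      ∈ {x : ∀ i, Y i | x k ∈ c} := by
    simp [Function.update_of_ne hkk, hz]
  have := h hx
  simpa using this

end Aux

theorem prod_coprod_S2 {I : Type*} [Nonempty I] {Y : I → Type*}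
    (B : ∀ i, Set (Set (Y i))) (hB : ∀ i, IsBallSpace (B i)) :
    ((∀ i, S2 (B i)) ↔ S2 (prodBalls B)) ∧
    ((∀ i, S2 (B i)) ↔ S2 (coprodBalls B)) := by
  classical
  haveI hY : ∀ i, Nonempty (Y i) := fun i => by
    obtain ⟨b, hb⟩ := (hB i).1
    obtain ⟨y, _⟩ := (hB i).2 b hb
    exact ⟨y⟩
  choose e he using fun i => (hB i).1
  have cyl_inj : ∀ {k : I} {c c' : Set (Y k)},
      {x : ∀ i, Y i | x k ∈ c} = {x : ∀ i, Y i | x k ∈ c'} → c = c' := by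
    intro k c c' h
    exact subset_antisymm (cyl_subset_same h.subset) (cyl_subset_same h.superset)
  have P1 : (∀ i, S2 (B i)) → S2 (prodBalls B) := by
    rintro hS N ⟨hNne, hNB, hNchain⟩
    by_cases hU : ∀ S ∈ N, S = univ
    · obtain ⟨i⟩ := ‹Nonempty I›
      refine ⟨{x : ∀ i, Y i | x i ∈ e i}, mem_prodBalls_iff.mpr ⟨i, e i, he i, rfl⟩, ?_⟩
      intro x _
      refine mem_sInter.mpr fun S hS' => ?_
      rw [hU S hS']; exact mem_univ x
    · push_neg at hU
      obtain ⟨S0, hS0N, hS0ne⟩ := hU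
      obtain ⟨k, c0, hc0, rfl⟩ := mem_prodBalls_iff.mp (hNB hS0N)
      have hc0ne : c0 ≠ univ := by
        intro h; apply hS0ne; rw [h]; ext x; simp
      set M : Set (Set (Y k)) := {c | c ∈ B k ∧ {x : ∀ i, Y i | x k ∈ c} ∈ N} with hM
      have hMne : M.Nonempty := ⟨c0, hc0, hS0N⟩
      have hMB : M ⊆ B k := fun c hc => hc.1
      have hMchain : IsChain (· ⊆ ·) M := fun c hc c' hc' hne =>
        (hNchain hc.2 hc'.2 (fun h => hne (cyl_inj h))).imp cyl_subset_same cyl_subset_same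
      obtain ⟨d, hd, hdsub⟩ := hS k M ⟨hMne, hMB, hMchain⟩
      refine ⟨{x : ∀ i, Y i | x k ∈ d}, mem_prodBalls_iff.mpr ⟨k, d, hd, rfl⟩, ?_⟩
      intro x hx
      refine mem_sInter.mpr fun S hSN => ?_
      obtain ⟨k', c', hc', rfl⟩ := mem_prodBalls_iff.mp (hNB hSN)
      by_cases hkk : k' = k
      · subst hkk
        have hmem : c' ∈ M := ⟨hc', hSN⟩
        exact mem_sInter.mp (hdsub hx) c' hmem
      · have hc'ne := (hB k').2 c' hc'
        have hc0pos := (hB k).2 c0 hc0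
        have hkk' : k ≠ k' := fun h => hkk h.symm
        rcases eq_or_ne ({x : ∀ i, Y i | x k' ∈ c'}) ({x : ∀ i, Y i | x k ∈ c0}) with heq | hne
        · exact absurd (cyl_subset_ne (Ne.symm hkk') hc'ne heq.subset) hc0ne
        · rcases hNchain hSN hS0N hne with h | h
          · exact absurd (cyl_subset_ne (Ne.symm hkk') hc'ne h) hc0ne
          · have hcu : c' = univ := cyl_subset_ne hkk' hc0pos h
            show x k' ∈ c'
            rw [hcu]; exact mem_univ _
  have P2 : S2 (prodBalls B) → ∀ i, S2 (B i) := by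
    rintro hS k N ⟨hNne, hNB, hNchain⟩
    set N' : Set (Set (∀ i, Y i)) := (fun c => {x : ∀ i, Y i | x k ∈ c}) '' N with hN'def
    have hN' : IsNest (prodBalls B) N' := by
      refine ⟨hNne.image _, ?_, ?_⟩
      · rintro _ ⟨c, hc, rfl⟩
        exact mem_prodBalls_iff.mpr ⟨k, c, hNB hc, rfl⟩
      · rintro _ ⟨c, hc, rfl⟩ _ ⟨c', hc', rfl⟩ hne
        have hcc : c ≠ c' := fun h => hne (by rw [h])
        exact (hNchain hc hc' hcc).imp (fun h x hx => h hx) (fun h x hx => h hx)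
    obtain ⟨S, hSB, hSsub⟩ := hS N' hN'
    obtain ⟨k', d, hd, rfl⟩ := mem_prodBalls_iff.mp hSB
    have hdne := (hB k').2 d hd
    by_cases hkk : k' = k
    · subst hkk
      refine ⟨d, hd, ?_⟩
      intro y hy
      refine mem_sInter.mpr fun c hcN => ?_
      have hsub : {x : ∀ i, Y i | x k' ∈ d} ⊆ {x : ∀ i, Y i | x k' ∈ c} :=
        hSsub.trans (sInter_subset_of_mem ⟨c, hcN, rfl⟩)
      exact cyl_subset_same hsub hy
    · refine ⟨e k, he k, ?_⟩
      intro y _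
      refine mem_sInter.mpr fun c hcN => ?_
      have hsub : {x : ∀ i, Y i | x k' ∈ d} ⊆ {x : ∀ i, Y i | x k ∈ c} :=
        hSsub.trans (sInter_subset_of_mem ⟨c, hcN, rfl⟩)
      have hcu : c = univ := cyl_subset_ne hkk hdne hsub
      rw [hcu]; exact mem_univ y
  have P3 : (∀ i, S2 (B i)) → S2 (coprodBalls B) := by
    rintro hS N ⟨hNne, hNB, hNchain⟩
    have hproj : ∀ S ∈ N, ∀ i, {y : Y i | (⟨i, y⟩ : Σ i, Y i) ∈ S} ∈ B i := by
      intro S hSN i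
      obtain ⟨b, hb, rfl⟩ := hNB hSN
      exact hb i
    have key : ∀ i, ∃ d ∈ B i, ∀ S ∈ N, d ⊆ {y : Y i | (⟨i, y⟩ : Σ i, Y i) ∈ S} := by
      intro i
      set M : Set (Set (Y i)) := (fun S => {y : Y i | (⟨i, y⟩ : Σ i, Y i) ∈ S}) '' N with hMdef
      have hMnest : IsNest (B i) M := by
        refine ⟨hNne.image _, ?_, ?_⟩
        · rintro _ ⟨S, hSN, rfl⟩; exact hproj S hSN i
        · rintro _ ⟨S, hSN, rfl⟩ _ ⟨S', hS'N, rfl⟩ hne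
          have hSS : S ≠ S' := fun h => hne (by rw [h])
          exact (hNchain hSN hS'N hSS).imp (fun h y hy => h hy) (fun h y hy => h hy)
      obtain ⟨d, hd, hdsub⟩ := hS i M hMnest
      exact ⟨d, hd, fun S hSN => hdsub.trans (sInter_subset_of_mem ⟨S, hSN, rfl⟩)⟩
    choose d hd hdsub using key
    refine ⟨{p : Σ i, Y i | p.2 ∈ d p.1}, ⟨d, hd, rfl⟩, ?_⟩
    rintro ⟨i, y⟩ hp
    exact mem_sInter.mpr fun S hSN => hdsub i S hSN hp
  have P4 : S2 (coprodBalls B) → ∀ i, S2 (B i) := by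
    rintro hS k N ⟨hNne, hNB, hNchain⟩
    set F : Set (Y k) → Set (Σ i, Y i) :=
      fun c => {p : Σ i, Y i | p.2 ∈ Function.update e k c p.1} with hFdef
    have hFmem : ∀ c ∈ N, F c ∈ coprodBalls B := by
      intro c hc
      refine ⟨Function.update e k c, fun i => ?_, rfl⟩
      by_cases h : i = k
      · subst h; simpa using hNB hc
      · simpa [Function.update_of_ne h] using he i
    have hFmono : ∀ {c c' : Set (Y k)}, c ⊆ c' → F c ⊆ F c' := by
      intro c c' h p hp
      obtain ⟨i, y⟩ := p
      simp only [hFdef, mem_setOf_eq] at hp ⊢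
      by_cases hik : i = k
      · subst hik
        rw [Function.update_self] at hp ⊢
        exact h hp
      · rwa [Function.update_of_ne hik] at hp ⊢
    obtain ⟨D, hDB, hDsub⟩ := hS (F '' N) ⟨hNne.image _,
      by rintro _ ⟨c, hc, rfl⟩; exact hFmem c hc,
      by
        rintro _ ⟨c, hc, rfl⟩ _ ⟨c', hc', rfl⟩ hne
        have hcc : c ≠ c' := fun h => hne (by rw [h])
        exact (hNchain hc hc' hcc).imp hFmono hFmono⟩
    obtain ⟨dd, hdd, rfl⟩ := hDB
    refine ⟨dd k, hdd k, ?_⟩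
    intro y hy
    refine mem_sInter.mpr fun c hcN => ?_
    have h1 : (⟨k, y⟩ : Σ i, Y i) ∈ {p : Σ i, Y i | p.2 ∈ dd p.1} := hy
    have h3 := mem_sInter.mp (hDsub h1) (F c) ⟨c, hcN, rfl⟩
    have h4 : y ∈ Function.update e k c k := h3
    rwa [Function.update_self] at h4
  exact ⟨⟨P1, P2⟩, ⟨P3, P4⟩⟩
end

section
/- Let I be a nonempty index set and let (Yᵢ, 𝓑ᵢ), i ∈ I, be ball spaces. The following are equivalent: (i) every (Yᵢ, 𝓑ᵢ), i ∈ I, satisfies S₄; (ii) the product ball space ∏ᵢ (Yᵢ, 𝓑ᵢ) satisfies S₄; (iii) the coproduct ball space ∐ᵢ (Yᵢ, 𝓑ᵢ) satisfies S₄. -/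
open Set

section Aux

variable {I : Type*} {Y : I → Type*}

def pb (k : I) (b : Set (Y k)) : Set (∀ i, Y i) := {x | x k ∈ b}

lemma pb_mono {k : I} {b c : Set (Y k)} (h : b ⊆ c) : pb k b ⊆ pb k c :=
  fun _ hx => h hx

lemma pb_univ (k : I) : pb (Y := Y) k univ = univ := by ext x; simp [pb]

lemma mem_prodBalls {B : ∀ i, Set (Set (Y i))} {S : Set (∀ i, Y i)} :
    S ∈ prodBalls B ↔ ∃ k, ∃ b ∈ B k, S = pb k b := by
  classical
  constructor
  · rintro ⟨c, k, hk, hu, rfl⟩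
    refine ⟨k, c k, hk, ?_⟩
    ext x
    simp only [pb, mem_setOf_eq]
    constructor
    · intro h; exact h k
    · intro h i
      by_cases hik : i = k
      · subst hik; exact h
      · rw [hu i hik]; trivial
  · rintro ⟨k, b, hb, rfl⟩
    refine ⟨Function.update (fun i => (univ : Set (Y i))) k b, k, ?_, ?_, ?_⟩
    · simpa using hb
    · intro i hik; simp [Function.update_of_ne hik]
    · ext x
      simp only [pb, mem_setOf_eq]
      constructor
      · intro h i
        by_cases hik : i = k
        · subst hik; simpa using h
        · simp [Function.update_of_ne hik]
      · intro h; simpa using h k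

def cb (b : ∀ i, Set (Y i)) : Set (Σ i, Y i) := {p | p.2 ∈ b p.1}

def comp (i : I) (S : Set (Σ j, Y j)) : Set (Y i) := {y | (⟨i, y⟩ : Σ j, Y j) ∈ S}

lemma comp_cb (b : ∀ i, Set (Y i)) (i : I) : comp i (cb b) = b i := rfl

lemma comp_mono (i : I) {S T : Set (Σ j, Y j)} (h : S ⊆ T) : comp i S ⊆ comp i T :=
  fun _ hy => h hy

lemma mem_coprodBalls {B : ∀ i, Set (Set (Y i))} {S : Set (Σ i, Y i)} :
    S ∈ coprodBalls B ↔ ∃ b : ∀ i, Set (Y i), (∀ i, b i ∈ B i) ∧ S = cb b :=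
  Iff.rfl

variable [∀ i, Nonempty (Y i)]

lemma pb_subset_of_ne {k j : I} (hkj : k ≠ j) {b : Set (Y k)} {c : Set (Y j)}
    (hb : b.Nonempty) (h : pb k b ⊆ pb j c) : c = univ := by
  classical
  obtain ⟨y, hy⟩ := hb
  ext z
  simp only [mem_univ, iff_true]
  set x : ∀ i, Y i :=
    Function.update (Function.update (fun i => Classical.arbitrary (Y i)) j z) k y with hx
  have hxk : x k = y := by simp [hx]
  have hxj : x j = z := by
    rw [hx, Function.update_of_ne (Ne.symm hkj), Function.update_self]
  have : x ∈ pb j c := h (by simp [pb, hxk, hy])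
  simpa [pb, hxj] using this

lemma pb_subset_iff {k : I} {b c : Set (Y k)} : pb k b ⊆ pb k c ↔ b ⊆ c := by
  classical
  constructor
  · intro h y hy
    have : Function.update (fun i => Classical.arbitrary (Y i)) k y ∈ pb k b := by
      simp [pb, hy]
    simpa [pb] using h this
  · exact pb_mono

lemma pb_injective {k : I} {b c : Set (Y k)} (h : pb k b = pb k c) : b = c :=
  Set.Subset.antisymm (pb_subset_iff.mp h.le) (pb_subset_iff.mp h.ge)

lemma pb_nonempty {k : I} {b : Set (Y k)} (hb : b.Nonempty) : (pb k b).Nonempty := by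
  classical
  obtain ⟨y, hy⟩ := hb
  exact ⟨Function.update (fun i => Classical.arbitrary (Y i)) k y, by simp [pb, hy]⟩

omit [∀ i, Nonempty (Y i)] in
lemma sInter_pb (k : I) (M : Set (Set (Y k))) : ⋂₀ (pb k '' M) = pb k (⋂₀ M) := by
  ext x
  simp [pb, sInter_image, mem_iInter]

end Aux

section Main

variable {I : Type*} {Y : I → Type*} {B : ∀ i, Set (Set (Y i))}

lemma prod_of_all (hB : ∀ i, IsBallSpace (B i)) (hS4 : ∀ i, S4 (B i)) :
    S4 (prodBalls B) := by
  haveI : ∀ i, Nonempty (Y i) := fun i => ⟨((hB i).2 _ (hB i).1.choose_spec).choose⟩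
  rintro N ⟨hNne, hNsub, hNchain⟩
  by_cases hex : ∀ S ∈ N, S = univ
  · obtain ⟨S, hS⟩ := hNne
    have h1 : ⋂₀ N = univ := by
      apply eq_univ_of_univ_subset
      intro x _
      rw [mem_sInter]
      intro T hT
      rw [hex T hT]; trivial
    have := hNsub hS
    rw [hex S hS] at this
    rwa [h1]
  · push_neg at hex
    obtain ⟨S0, hS0N, hS0ne⟩ := hex
    obtain ⟨k, b0, hb0, rfl⟩ := mem_prodBalls.mp (hNsub hS0N)
    have hb0ne : b0 ≠ univ := fun h => hS0ne (by rw [h, pb_univ])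
    set N' := {S ∈ N | S ⊆ pb k b0} with hN'
    have hN'sub : N' ⊆ N := fun S hS => hS.1
    have hinter : ⋂₀ N = ⋂₀ N' := by
      apply Subset.antisymm (sInter_subset_sInter hN'sub)
      intro x hx
      rw [mem_sInter]
      intro S hS
      rcases hNchain.total hS hS0N with h | h
      · exact hx S ⟨hS, h⟩
      · exact h (hx _ ⟨hS0N, Subset.rfl⟩)
    set M := {c | c ∈ B k ∧ pb k c ∈ N'} with hM
    have hMim : pb k '' M = N' := by
      apply Subset.antisymm
      · rintro _ ⟨c, hc, rfl⟩; exact hc.2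
      · intro S hS
        obtain ⟨j, c, hc, rfl⟩ := mem_prodBalls.mp (hNsub hS.1)
        have hjk : j = k := by
          by_contra hjk
          exact hb0ne (pb_subset_of_ne hjk ((hB j).2 c hc) hS.2)
        subst hjk
        exact ⟨c, ⟨hc, hS⟩, rfl⟩
    have hMnest : IsNest (B k) M := by
      refine ⟨⟨b0, hb0, hS0N, Subset.rfl⟩, fun c hc => hc.1, ?_⟩
      intro c hc c' hc' hne
      have hpne : pb k c ≠ pb k c' := fun h => hne (pb_injective h)
      rcases hNchain (hN'sub hc.2) (hN'sub hc'.2) hpne with h | h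
      · exact Or.inl (pb_subset_iff.mp h)
      · exact Or.inr (pb_subset_iff.mp h)
    rw [hinter, ← hMim, sInter_pb]
    exact mem_prodBalls.mpr ⟨k, _, hS4 k M hMnest, rfl⟩

lemma all_of_prod (hB : ∀ i, IsBallSpace (B i)) (h : S4 (prodBalls B)) (k : I) :
    S4 (B k) := by
  haveI : ∀ i, Nonempty (Y i) := fun i => ⟨((hB i).2 _ (hB i).1.choose_spec).choose⟩
  rintro N ⟨hNne, hNsub, hNchain⟩
  have hN' : IsNest (prodBalls B) (pb k '' N) := by
    refine ⟨hNne.image _, ?_, ?_⟩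
    · rintro _ ⟨b, hb, rfl⟩
      exact mem_prodBalls.mpr ⟨k, b, hNsub hb, rfl⟩
    · rintro _ ⟨b, hb, rfl⟩ _ ⟨c, hc, rfl⟩ hne
      have hbc : b ≠ c := fun h => hne (by rw [h])
      rcases hNchain hb hc hbc with h' | h'
      · exact Or.inl (pb_mono h')
      · exact Or.inr (pb_mono h')
  have hmem := h _ hN'
  rw [sInter_pb] at hmem
  obtain ⟨j, c, hc, hec⟩ := mem_prodBalls.mp hmem
  by_cases hjk : j = k
  · subst hjk
    rwa [pb_injective hec]
  · have hcne := (hB j).2 c hc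
    have h1 : (⋂₀ N).Nonempty := by
      by_contra h0
      rw [not_nonempty_iff_eq_empty] at h0
      have h2 : pb k (⋂₀ N) = (∅ : Set (∀ i, Y i)) := by
        rw [h0]; ext x; simp [pb]
      rw [h2] at hec
      exact absurd hec.symm (pb_nonempty hcne).ne_empty
    have huniv : ⋂₀ N = univ :=
      pb_subset_of_ne hjk hcne hec.ge
    obtain ⟨b, hb⟩ := hNne
    have hbu : b = univ :=
      eq_univ_of_univ_subset (huniv ▸ sInter_subset_of_mem hb)
    rw [huniv, ← hbu]
    exact hNsub hb

lemma coprod_of_all (hS4 : ∀ i, S4 (B i)) : S4 (coprodBalls B) := by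
  rintro N ⟨hNne, hNsub, hNchain⟩
  have hcomp : ∀ i, ∀ S ∈ N, comp i S ∈ B i := by
    intro i S hS
    obtain ⟨b, hb, rfl⟩ := hNsub hS
    exact hb i
  have key : ⋂₀ N = cb (fun i => ⋂₀ (comp i '' N)) := by
    ext p
    simp only [mem_sInter, cb, mem_setOf_eq, sInter_image, mem_iInter]
    exact ⟨fun h S hS => h S hS, fun h S hS => h S hS⟩
  rw [key]
  refine ⟨_, fun i => hS4 i _ ⟨hNne.image _, ?_, ?_⟩, rfl⟩
  · rintro _ ⟨S, hS, rfl⟩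
    exact hcomp i S hS
  · rintro _ ⟨S, hS, rfl⟩ _ ⟨T, hT, rfl⟩ hne
    have hST : S ≠ T := fun h => hne (by rw [h])
    rcases hNchain hS hT hST with h | h
    · exact Or.inl (comp_mono i h)
    · exact Or.inr (comp_mono i h)

lemma all_of_coprod (hB : ∀ i, IsBallSpace (B i)) (h : S4 (coprodBalls B)) (k : I) :
    S4 (B k) := by
  classical
  rintro N ⟨hNne, hNsub, hNchain⟩
  choose d hd using fun i => (hB i).1
  set f : Set (Y k) → Set (Σ i, Y i) := fun b => cb (Function.update d k b) with hf
  have hfmono : ∀ {b c : Set (Y k)}, b ⊆ c → f b ⊆ f c := by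
    intro b c hbc p hp
    rcases eq_or_ne p.1 k with h1 | h1
    · simp only [hf, cb, mem_setOf_eq] at hp ⊢
      subst h1
      rw [Function.update_self] at hp ⊢
      exact hbc hp
    · simp only [hf, cb, mem_setOf_eq, Function.update_of_ne h1] at hp ⊢
      exact hp
  have hNest : IsNest (coprodBalls B) (f '' N) := by
    refine ⟨hNne.image _, ?_, ?_⟩
    · rintro _ ⟨b, hb, rfl⟩
      refine ⟨Function.update d k b, fun i => ?_, rfl⟩
      rcases eq_or_ne i k with h1 | h1
      · subst h1; rw [Function.update_self]; exact hNsub hb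
      · rw [Function.update_of_ne h1]; exact hd i
    · rintro _ ⟨b, hb, rfl⟩ _ ⟨c, hc, rfl⟩ hne
      have hbc : b ≠ c := fun h => hne (by rw [h])
      rcases hNchain hb hc hbc with h' | h'
      · exact Or.inl (hfmono h')
      · exact Or.inr (hfmono h')
  obtain ⟨e, he, hee⟩ := h _ hNest
  have hk : comp k (⋂₀ (f '' N)) = ⋂₀ N := by
    ext y
    simp only [comp, mem_setOf_eq, mem_sInter, sInter_image, mem_iInter]
    constructor
    · intro hy b hb
      have := hy b hb
      simpa only [hf, cb, mem_setOf_eq, Function.update_self] using this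
    · intro hy b hb
      simpa only [hf, cb, mem_setOf_eq, Function.update_self] using hy b hb
  rw [← hk, hee]
  exact he k

end Main

theorem prod_coprod_S4 {I : Type*} [Nonempty I] {Y : I → Type*}
    (B : ∀ i, Set (Set (Y i))) (hB : ∀ i, IsBallSpace (B i)) :
    ((∀ i, S4 (B i)) ↔ S4 (prodBalls B)) ∧
    ((∀ i, S4 (B i)) ↔ S4 (coprodBalls B)) := by
  constructor
  · exact ⟨prod_of_all hB, fun h i => all_of_prod hB h i⟩
  · exact ⟨coprod_of_all, fun h i => all_of_coprod hB h i⟩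
end

section
/- Let X₁ = ℕ with 𝓑₁ the collection of all final segments {m ∈ ℕ : m ≥ n} for n ∈ ℕ, and let X₂ be the set of all countable ordinals (the ordinals below ω₁) with 𝓑₂ the collection of all final segments {β ∈ X₂ : β ≥ α} for α ∈ X₂. Then neither (X₁, 𝓑₁) nor (X₂, 𝓑₂) is spherically complete, but the coproduct ball space ∐ᵢ∈{1,2} (Xᵢ, 𝓑ᵢ) is spherically complete. -/
open Set

/-- The countable ordinals, i.e. the ordinals below `ω₁`. -/
def CountableOrd : Type 1 := { o : Ordinal.{0} // o.card ≤ Cardinal.aleph0 }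

noncomputable instance : LinearOrder CountableOrd :=
  inferInstanceAs (LinearOrder { o : Ordinal.{0} // o.card ≤ Cardinal.aleph0 })

/-- The final segments of `ℕ`. -/
def B1 : Set (Set ℕ) := { S | ∃ n : ℕ, S = Ici n }

/-- The final segments of the set of countable ordinals. -/
def B2 : Set (Set CountableOrd) := { S | ∃ α : CountableOrd, S = Ici α }

/-- The balls of the coproduct ball space of `(ℕ, B1)` and `(CountableOrd, B2)`
on the disjoint union `ℕ ⊕ CountableOrd`. -/
def coB : Set (Set (ℕ ⊕ CountableOrd)) :=
  { S | ∃ (b₁ : Set ℕ) (b₂ : Set CountableOrd), b₁ ∈ B1 ∧ b₂ ∈ B2 ∧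
      S = Sum.inl '' b₁ ∪ Sum.inr '' b₂ }

lemma countableOrd_le_iff {a b : CountableOrd} : a ≤ b ↔ a.1 ≤ b.1 := Iff.rfl

lemma countableOrd_card_le_iff {o : Ordinal.{0}} : o.card ≤ Cardinal.aleph0 ↔ o < (Order.succ Cardinal.aleph0).ord := by
  rw [Cardinal.lt_ord, Order.lt_succ_iff]

/-- successor in CountableOrd -/
lemma exists_gt_countableOrd (a : CountableOrd) : ∃ b : CountableOrd, a < b := by
  refine ⟨⟨Order.succ a.1, ?_⟩, ?_⟩
  · rw [Ordinal.card_succ]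
    calc a.1.card + 1 ≤ Cardinal.aleph0 + 1 := by gcongr; exact a.2
    _ = Cardinal.aleph0 := by simp
  · exact Order.lt_succ a.1

lemma coball_subset {n n' : ℕ} {α α' : CountableOrd}
    (h : Sum.inl '' Ici n ∪ Sum.inr '' Ici α ⊆ Sum.inl '' Ici n' ∪ Sum.inr '' Ici α') :
    n' ≤ n ∧ α' ≤ α := by
  constructor
  · have := h (Or.inl ⟨n, le_refl n, rfl⟩)
    rcases this with ⟨m, hm, hh⟩ | ⟨b, _, hh⟩
    · cases hh; exact hm
    · cases hh
  · have := h (Or.inr ⟨α, le_refl α, rfl⟩)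
    rcases this with ⟨m, _, hh⟩ | ⟨b, hb, hh⟩
    · cases hh
    · cases hh; exact hb

theorem coprod_sphComplete_converse_fails :
    ¬ SphComplete B1 ∧ ¬ SphComplete B2 ∧ SphComplete coB := by
  refine ⟨?_, ?_, ?_⟩
  · intro h
    obtain ⟨x, hx⟩ := h B1 ⟨⟨Ici 0, ⟨0, rfl⟩⟩, le_refl _, by
      rintro S ⟨n, rfl⟩ T ⟨m, rfl⟩ _
      rcases le_total n m with hnm | hnm
      · exact Or.inr (Ici_subset_Ici.2 hnm)
      · exact Or.inl (Ici_subset_Ici.2 hnm)⟩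
    have := hx (Ici (x + 1)) ⟨x + 1, rfl⟩
    simp at this
  · intro h
    obtain ⟨x, hx⟩ := h B2 ⟨⟨Ici ⟨0, by simp⟩, ⟨_, rfl⟩⟩, le_refl _, by
      rintro S ⟨a, rfl⟩ T ⟨b, rfl⟩ _
      rcases le_total a b with hab | hab
      · exact Or.inr (Ici_subset_Ici.2 hab)
      · exact Or.inl (Ici_subset_Ici.2 hab)⟩
    obtain ⟨y, hy⟩ := exists_gt_countableOrd x
    have := hx (Ici y) ⟨y, rfl⟩
    exact absurd this (by simpa using hy)
  · rintro N ⟨⟨S₀, hS₀⟩, hNB, hchain⟩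
    -- choose parameters
    have hform : ∀ S, ∃ (n : ℕ) (α : CountableOrd), S ∈ N →
        S = Sum.inl '' Ici n ∪ Sum.inr '' Ici α := by
      intro S
      by_cases hS : S ∈ N
      · obtain ⟨b₁, b₂, ⟨n, rfl⟩, ⟨α, rfl⟩, rfl⟩ := hNB hS
        exact ⟨n, α, fun _ => rfl⟩
      · exact ⟨0, ⟨0, by simp⟩, fun h => absurd h hS⟩
    choose nf af hf using hform
    by_cases hbd : ∃ m : ℕ, ∀ S ∈ N, nf S ≤ m
    · obtain ⟨m, hm⟩ := hbd
      refine ⟨Sum.inl m, ?_⟩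
      intro S hS
      rw [hf S hS]
      exact Or.inl ⟨m, hm S hS, rfl⟩
    · push_neg at hbd
      choose g hgN hg using hbd
      -- sup of ordinals
      set F : ℕ → Ordinal.{0} := fun m => (af (g m)).1 with hF
      have hsup : iSup F < (Order.succ Cardinal.aleph0).ord := by
        apply Ordinal.iSup_lt_ord
        · rw [Cardinal.succ_aleph0, Cardinal.isRegular_aleph_one.cof_eq]
          simpa using Cardinal.aleph0_lt_aleph_one
        · intro i
          exact countableOrd_card_le_iff.1 (af (g i)).2
      set β : CountableOrd := ⟨iSup F, countableOrd_card_le_iff.2 hsup⟩ with hβ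
      refine ⟨Sum.inr β, ?_⟩
      intro S hS
      rw [hf S hS]
      refine Or.inr ⟨β, ?_, rfl⟩
      -- need af S ≤ β
      have hkey : (af S).1 ≤ F (nf S) := by
        have hg' := hg (nf S)
        have hcomp : S = g (nf S) ∨ (S ⊆ g (nf S) ∨ g (nf S) ⊆ S) := by
          by_cases he : S = g (nf S)
          · exact Or.inl he
          · exact Or.inr (hchain hS (hgN (nf S)) he)
        have hSf := hf S hS
        have hGf := hf (g (nf S)) (hgN (nf S))
        rcases hcomp with he | hsub | hsub
        · rw [← he] at hg'; omega
        · have hsub' : Sum.inl '' Ici (nf S) ∪ Sum.inr '' Ici (af S) ⊆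
              Sum.inl '' Ici (nf (g (nf S))) ∪ Sum.inr '' Ici (af (g (nf S))) := by
            rw [← hSf, ← hGf]; exact hsub
          have := coball_subset hsub'
          omega
        · have hsub' : Sum.inl '' Ici (nf (g (nf S))) ∪ Sum.inr '' Ici (af (g (nf S))) ⊆
              Sum.inl '' Ici (nf S) ∪ Sum.inr '' Ici (af S) := by
            rw [← hSf, ← hGf]; exact hsub
          have := coball_subset hsub'
          exact this.2
      calc (af S).1 ≤ F (nf S) := hkey
        _ ≤ iSup F := le_ciSup (Ordinal.bddAbove_range F) _
end

section
/- Let G be a linearly ordered abelian group. Assume that the order ball space of G (whose balls are all closed bounded intervals [a,b] with a ≤ b) is spherically complete, and that the ultrametric ball space of G (whose balls are all ultrametric balls B(a,c) = { x ∈ G : ∃ n ∈ ℕ, |x − a| ≤ n·|c| } with a, c ∈ G) is spherically complete. Then the ball space of all bar-bells of G, i.e., all sets of the form B(a,c) ∪ [a,b] ∪ B(b,d) with a, b, c, d ∈ G and a ≤ b, is spherically complete. -/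
open Set

/-- The ultrametric ball `B(a,c) = { x | ∃ n ∈ ℕ, |x − a| ≤ n·|c| }` of the natural
valuation of a linearly ordered abelian group. -/
def umBall {G : Type*} [AddCommGroup G] [LinearOrder G] [IsOrderedAddMonoid G] (a c : G) : Set G :=
  { x | ∃ n : ℕ, |x - a| ≤ n • |c| }

/-- The order ball space: all closed bounded intervals `[a,b]` with `a ≤ b`. -/
def orderBalls (G : Type*) [AddCommGroup G] [LinearOrder G] [IsOrderedAddMonoid G] : Set (Set G) :=
  { S | ∃ a b : G, a ≤ b ∧ S = Icc a b }

/-- The ultrametric ball space: all ultrametric balls `B(a,c)`. -/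
def umBalls (G : Type*) [AddCommGroup G] [LinearOrder G] [IsOrderedAddMonoid G] : Set (Set G) :=
  { S | ∃ a c : G, S = umBall a c }

/-- The bar-bells: sets of the form `B(a,c) ∪ [a,b] ∪ B(b,d)` with `a ≤ b`. -/
def barBells (G : Type*) [AddCommGroup G] [LinearOrder G] [IsOrderedAddMonoid G] : Set (Set G) :=
  { S | ∃ a b c d : G, a ≤ b ∧ S = umBall a c ∪ Icc a b ∪ umBall b d }

section Aux
variable {G : Type*} [AddCommGroup G] [LinearOrder G] [IsOrderedAddMonoid G]

lemma mem_umBall_self (a c : G) : a ∈ umBall a c := ⟨0, by simp⟩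

lemma umBall_between {a c x y z : G} (hx : x ∈ umBall a c) (hy : y ∈ umBall a c)
    (hxz : x ≤ z) (hzy : z ≤ y) : z ∈ umBall a c := by
  obtain ⟨n, hn⟩ := hx; obtain ⟨m, hm⟩ := hy
  refine ⟨n + m, ?_⟩
  have h1 : x - a ≤ z - a := sub_le_sub_right hxz a
  have h2 : z - a ≤ y - a := sub_le_sub_right hzy a
  refine (abs_le_max_abs_abs h1 h2).trans (max_le ?_ ?_)
  · exact hn.trans (nsmul_le_nsmul_left (abs_nonneg c) (Nat.le_add_right n m))
  · exact hm.trans (nsmul_le_nsmul_left (abs_nonneg c) (Nat.le_add_left m n))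

lemma umBall_subset {a c a' c' : G} {n₀ : ℕ} (hcc : |c| ≤ n₀ • |c'|)
    {w : G} (hw : w ∈ umBall a c) (hw' : w ∈ umBall a' c') :
    umBall a c ⊆ umBall a' c' := by
  rintro x ⟨k, hk⟩
  obtain ⟨m, hm⟩ := hw; obtain ⟨l, hl⟩ := hw'
  refine ⟨k * n₀ + m * n₀ + l, ?_⟩
  have t1 : |x - a'| ≤ |x - a| + |a - w| + |w - a'| :=
    (abs_sub_le x w a').trans (add_le_add_left (abs_sub_le x a w) _)
  have hkc : |x - a| ≤ (k * n₀) • |c'| := by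
    calc |x - a| ≤ k • |c| := hk
    _ ≤ k • (n₀ • |c'|) := nsmul_le_nsmul_right hcc k
    _ = (k * n₀) • |c'| := smul_smul k n₀ |c'|
  have hmc : |a - w| ≤ (m * n₀) • |c'| := by
    calc |a - w| = |w - a| := abs_sub_comm a w
    _ ≤ m • |c| := hm
    _ ≤ m • (n₀ • |c'|) := nsmul_le_nsmul_right hcc m
    _ = (m * n₀) • |c'| := smul_smul m n₀ |c'|
  calc |x - a'| ≤ |x - a| + |a - w| + |w - a'| := t1
  _ ≤ (k * n₀) • |c'| + (m * n₀) • |c'| + l • |c'| := by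
      gcongr
  _ = (k * n₀ + m * n₀ + l) • |c'| := by
      rw [add_nsmul, add_nsmul]

lemma umBall_comparable {a c a' c' : G} (h : (umBall a c ∩ umBall a' c').Nonempty) :
    umBall a c ⊆ umBall a' c' ∨ umBall a' c' ⊆ umBall a c := by
  obtain ⟨w, hw, hw'⟩ := h
  by_cases hc : ∃ n : ℕ, |c| ≤ n • |c'|
  · obtain ⟨n, hn⟩ := hc; exact Or.inl (umBall_subset hn hw hw')
  · push_neg at hc
    have h1 : |c'| ≤ 1 • |c| := by
      have := hc 1
      rw [one_nsmul] at this ⊢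
      exact this.le
    exact Or.inr (umBall_subset h1 hw' hw)

lemma barbell_between {a b c d : G} (hab : a ≤ b) {x y z : G}
    (hx : x ∈ umBall a c ∪ Icc a b ∪ umBall b d)
    (hy : y ∈ umBall a c ∪ Icc a b ∪ umBall b d)
    (hxz : x ≤ z) (hzy : z ≤ y) :
    z ∈ umBall a c ∪ Icc a b ∪ umBall b d := by
  by_cases hza : a ≤ z
  · by_cases hzb : z ≤ b
    · exact Or.inl (Or.inr ⟨hza, hzb⟩)
    · push_neg at hzb
      rcases hy with (hy | hy) | hy
      · exact Or.inl (Or.inl (umBall_between (mem_umBall_self a c) hy hza hzy))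
      · exact absurd (hzy.trans hy.2) (not_le.2 hzb)
      · exact Or.inr (umBall_between (mem_umBall_self b d) hy hzb.le hzy)
  · push_neg at hza
    rcases hx with (hx | hx) | hx
    · exact Or.inl (Or.inl (umBall_between hx (mem_umBall_self a c) hxz hza.le))
    · exact absurd (hx.1.trans hxz) (not_le.2 hza)
    · exact Or.inr (umBall_between hx (mem_umBall_self b d) hxz (hza.le.trans hab))

end Aux

section Sand
variable {G : Type*} [AddCommGroup G] [LinearOrder G] [IsOrderedAddMonoid G]

lemma sandwich_left {a b c d : G} (hab : a ≤ b) {S' : Set G}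
    (hS' : S' ⊆ umBall a c ∪ Icc a b ∪ umBall b d)
    (hlt : ∀ s ∈ S', s < a) :
    ∃ W, (∃ x e : G, W = umBall x e) ∧ S' ⊆ W ∧
      W ⊆ umBall a c ∪ Icc a b ∪ umBall b d := by
  rcases Set.eq_empty_or_nonempty (umBall a c ∩ umBall b d) with hUV | hUV
  · refine ⟨umBall a c, ⟨a, c, rfl⟩, ?_, fun x hx => Or.inl (Or.inl hx)⟩
    intro s hs
    rcases hS' hs with (h | h) | h
    · exact h
    · exact absurd (hlt s hs) (not_lt.2 h.1)
    · exfalso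
      have ha' : a ∈ umBall b d := umBall_between h (mem_umBall_self b d) (hlt s hs).le hab
      exact absurd hUV (Set.Nonempty.ne_empty ⟨a, mem_umBall_self a c, ha'⟩)
  · rcases umBall_comparable hUV with hsub | hsub
    · refine ⟨umBall b d, ⟨b, d, rfl⟩, ?_, fun x hx => Or.inr hx⟩
      intro s hs
      rcases hS' hs with (h | h) | h
      · exact hsub h
      · exact absurd (hlt s hs) (not_lt.2 h.1)
      · exact h
    · refine ⟨umBall a c, ⟨a, c, rfl⟩, ?_, fun x hx => Or.inl (Or.inl hx)⟩
      intro s hs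
      rcases hS' hs with (h | h) | h
      · exact h
      · exact absurd (hlt s hs) (not_lt.2 h.1)
      · exact hsub h

lemma sandwich_right {a b c d : G} (hab : a ≤ b) {S' : Set G}
    (hS' : S' ⊆ umBall a c ∪ Icc a b ∪ umBall b d)
    (hlt : ∀ s ∈ S', b < s) :
    ∃ W, (∃ x e : G, W = umBall x e) ∧ S' ⊆ W ∧
      W ⊆ umBall a c ∪ Icc a b ∪ umBall b d := by
  rcases Set.eq_empty_or_nonempty (umBall a c ∩ umBall b d) with hUV | hUV
  · refine ⟨umBall b d, ⟨b, d, rfl⟩, ?_, fun x hx => Or.inr hx⟩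
    intro s hs
    rcases hS' hs with (h | h) | h
    · exfalso
      have hb' : b ∈ umBall a c := umBall_between (mem_umBall_self a c) h hab (hlt s hs).le
      exact absurd hUV (Set.Nonempty.ne_empty ⟨b, hb', mem_umBall_self b d⟩)
    · exact absurd (hlt s hs) (not_lt.2 h.2)
    · exact h
  · rcases umBall_comparable hUV with hsub | hsub
    · refine ⟨umBall b d, ⟨b, d, rfl⟩, ?_, fun x hx => Or.inr hx⟩
      intro s hs
      rcases hS' hs with (h | h) | h
      · exact hsub h
      · exact absurd (hlt s hs) (not_lt.2 h.2)
      · exact h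
    · refine ⟨umBall a c, ⟨a, c, rfl⟩, ?_, fun x hx => Or.inl (Or.inl hx)⟩
      intro s hs
      rcases hS' hs with (h | h) | h
      · exact h
      · exact absurd (hlt s hs) (not_lt.2 h.2)
      · exact hsub h

end Sand

/-- Auxiliary structure for the tower argument. -/
structure BBTriple (G : Type*) where
  x : G
  y : G
  T : Set G

section Tower
variable {G : Type*} [AddCommGroup G] [LinearOrder G] [IsOrderedAddMonoid G]

/-- `t'` nests strictly inside `t`. -/
def BBCompat (t t' : BBTriple G) : Prop :=
  t'.T ⊆ t.T ∧ ∀ s ∈ t'.T, t.x < s ∧ s < t.y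

lemma bbcompat_irrefl {t : BBTriple G} (hx : t.x ∈ t.T) : ¬ BBCompat t t :=
  fun h => lt_irrefl t.x (h.2 t.x hx).1

/-- Towers with respect to a nest `N`, cut sides `L R`, and top element `S₁`. -/
def IsTower (N : Set (Set G)) (L R : Set G) (S₁ : Set G) (W : Set (BBTriple G)) : Prop :=
  (∀ t ∈ W, t.T ∈ N ∧ t.T ⊆ S₁ ∧ t.x ∈ t.T ∧ t.x ∈ L ∧ t.y ∈ t.T ∧ t.y ∈ R) ∧
  ∀ t ∈ W, ∀ t' ∈ W, t ≠ t' → BBCompat t t' ∨ BBCompat t' t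

end Tower

theorem barBells_sphComplete {G : Type*} [AddCommGroup G] [LinearOrder G] [IsOrderedAddMonoid G]
    (ho : SphComplete (orderBalls G)) (hu : SphComplete (umBalls G)) :
    SphComplete (barBells G) := by
  rintro N ⟨hNe, hNB, hchain⟩
  by_contra hempty
  have hBB : ∀ S, S ∈ N → ∃ a b c d : G, a ≤ b ∧ S = umBall a c ∪ Icc a b ∪ umBall b d :=
    fun S hS => hNB hS
  choose! a b c d hab hrep using hBB
  have haS : ∀ S, S ∈ N → a S ∈ S := fun S hS =>
    (hrep S hS).symm.subset (Or.inl (Or.inl (mem_umBall_self _ _)))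
  have hbS : ∀ S, S ∈ N → b S ∈ S := fun S hS =>
    (hrep S hS).symm.subset (Or.inr (mem_umBall_self _ _))
  have hne : ∀ S, S ∈ N → S.Nonempty := fun S hS => ⟨a S, haS S hS⟩
  have hconv : ∀ S, S ∈ N → ∀ x ∈ S, ∀ y ∈ S, ∀ z, x ≤ z → z ≤ y → z ∈ S := by
    intro S hS x hx y hy z hxz hzy
    rw [hrep S hS] at hx hy ⊢
    exact barbell_between (hab S hS) hx hy hxz hzy
  set L : Set G := {x | ∃ S ∈ N, ∀ s ∈ S, x < s} with hLdef
  set R : Set G := {x | ∃ S ∈ N, ∀ s ∈ S, s < x} with hRdef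
  have hLR : ∀ x : G, x ∈ L ∨ x ∈ R := by
    intro x
    obtain ⟨S, hS, hxS⟩ : ∃ S ∈ N, x ∉ S := by
      by_contra h; push_neg at h
      exact hempty ⟨x, mem_sInter.mpr h⟩
    by_cases h1 : ∃ s ∈ S, s ≤ x
    · by_cases h2 : ∃ s ∈ S, x ≤ s
      · obtain ⟨s1, hs1, hs1x⟩ := h1; obtain ⟨s2, hs2, hxs2⟩ := h2
        exact absurd (hconv S hS s1 hs1 s2 hs2 x hs1x hxs2) hxS
      · push_neg at h2
        exact Or.inr ⟨S, hS, fun s hs => h2 s hs⟩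
    · push_neg at h1
      exact Or.inl ⟨S, hS, fun s hs => h1 s hs⟩
  have min2 : ∀ A, A ∈ N → ∀ B, B ∈ N → ∃ C, C ∈ N ∧ C ⊆ A ∧ C ⊆ B := by
    intro A hA B hB
    rcases eq_or_ne A B with rfl | hne'
    · exact ⟨A, hA, subset_rfl, subset_rfl⟩
    · rcases hchain hA hB hne' with h | h
      · exact ⟨A, hA, subset_rfl, h⟩
      · exact ⟨B, hB, h, subset_rfl⟩
  have hLltR : ∀ x ∈ L, ∀ y ∈ R, x < y := by
    rintro x ⟨Sx, hSx, hx⟩ y ⟨Sy, hSy, hy⟩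
    obtain ⟨C, hC, hCx, hCy⟩ := min2 Sx hSx Sy hSy
    obtain ⟨s, hs⟩ := hne C hC
    exact (hx s (hCx hs)).trans (hy s (hCy hs))
  set 𝒲 : Set (Set G) :=
    {W | (∃ x e : G, W = umBall x e) ∧ (∃ T ∈ N, W ⊆ T) ∧ (∃ S' ∈ N, S' ⊆ W)} with h𝒲def
  by_cases hcof : ∀ S ∈ N, ∃ W ∈ 𝒲, W ⊆ S
  · -- ultrametric case
    have hnest : IsNest (umBalls G) 𝒲 := by
      refine ⟨?_, ?_, ?_⟩
      · obtain ⟨S, hS⟩ := hNe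
        obtain ⟨W, hW, -⟩ := hcof S hS
        exact ⟨W, hW⟩
      · rintro W ⟨⟨x, e, rfl⟩, -, -⟩; exact ⟨x, e, rfl⟩
      · rintro W₁ ⟨⟨x₁, e₁, rfl⟩, -, S₁', hS₁', hsub₁⟩ W₂ ⟨⟨x₂, e₂, rfl⟩, -, S₂', hS₂', hsub₂⟩ hne'
        obtain ⟨C, hC, hC1, hC2⟩ := min2 S₁' hS₁' S₂' hS₂'
        obtain ⟨s, hs⟩ := hne C hC
        exact umBall_comparable ⟨s, hsub₁ (hC1 hs), hsub₂ (hC2 hs)⟩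
    obtain ⟨z, hz⟩ := hu 𝒲 hnest
    rcases hLR z with ⟨S, hS, h⟩ | ⟨S, hS, h⟩
    · obtain ⟨W, hW, hWS⟩ := hcof S hS
      exact lt_irrefl z (h z (hWS (hz W hW)))
    · obtain ⟨W, hW, hWS⟩ := hcof S hS
      exact lt_irrefl z (h z (hWS (hz W hW)))
  · -- order case
    push_neg at hcof
    obtain ⟨S₁, hS₁, hS₁W⟩ := hcof
    have hA : ∀ T, T ∈ N → T ⊆ S₁ → a T ∈ L ∧ b T ∈ R := by
      intro T hT hTS₁
      constructor
      · rcases hLR (a T) with h | h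
        · exact h
        · exfalso
          obtain ⟨S', hS', hlt⟩ := h
          have hS'T : S' ⊆ T := by
            rcases eq_or_ne S' T with rfl | hne'
            · exact subset_rfl
            · rcases hchain hS' hT hne' with h | h
              · exact h
              · exact absurd (hlt (a T) (h (haS T hT))) (lt_irrefl _)
          have hsub : S' ⊆ umBall (a T) (c T) ∪ Icc (a T) (b T) ∪ umBall (b T) (d T) := by
            rw [← hrep T hT]; exact hS'T
          obtain ⟨W, hWball, hS'W, hWT⟩ := sandwich_left (hab T hT) hsub hlt
          rw [← hrep T hT] at hWT
          exact hS₁W W ⟨hWball, ⟨T, hT, hWT⟩, ⟨S', hS', hS'W⟩⟩ (hWT.trans hTS₁)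
      · rcases hLR (b T) with h | h
        · exfalso
          obtain ⟨S', hS', hlt⟩ := h
          have hS'T : S' ⊆ T := by
            rcases eq_or_ne S' T with rfl | hne'
            · exact subset_rfl
            · rcases hchain hS' hT hne' with h | h
              · exact h
              · exact absurd (hlt (b T) (h (hbS T hT))) (lt_irrefl _)
          have hsub : S' ⊆ umBall (a T) (c T) ∪ Icc (a T) (b T) ∪ umBall (b T) (d T) := by
            rw [← hrep T hT]; exact hS'T
          obtain ⟨W, hWball, hS'W, hWT⟩ := sandwich_right (hab T hT) hsub hlt
          rw [← hrep T hT] at hWT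
          exact hS₁W W ⟨hWball, ⟨T, hT, hWT⟩, ⟨S', hS', hS'W⟩⟩ (hWT.trans hTS₁)
        · exact h
    obtain ⟨Wm, hWm⟩ : ∃ m, Maximal (· ∈ {W : Set (BBTriple G) | IsTower N L R S₁ W}) m := by
      apply zorn_subset
      intro cc hcc hchaincc
      refine ⟨⋃₀ cc, ⟨?_, ?_⟩, fun s hs => subset_sUnion_of_mem hs⟩
      · rintro t ⟨W, hWcc, htW⟩
        exact (hcc hWcc).1 t htW
      · rintro t ⟨W, hWcc, htW⟩ t' ⟨W', hW'cc, ht'W⟩ hne'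
        rcases eq_or_ne W W' with rfl | hWne
        · exact (hcc hWcc).2 t htW t' ht'W hne'
        · rcases hchaincc hWcc hW'cc hWne with h | h
          · exact (hcc hW'cc).2 t (h htW) t' ht'W hne'
          · exact (hcc hWcc).2 t htW t' (h ht'W) hne'
    have hWt : IsTower N L R S₁ Wm := hWm.1
    have hcofT : ∀ S ∈ N, ∃ t ∈ Wm, t.T ⊆ S := by
      by_contra hc
      push_neg at hc
      obtain ⟨S₂, hS₂, hS₂T⟩ := hc
      have hS₂sub : ∀ t ∈ Wm, S₂ ⊆ t.T := by
        intro t ht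
        rcases eq_or_ne S₂ t.T with h | hne'
        · exact subset_of_eq h
        · rcases hchain hS₂ (hWt.1 t ht).1 hne' with h | h
          · exact h
          · exact absurd h (hS₂T t ht)
      have hext : ∀ Tp, Tp ∈ N → Tp ⊆ S₂ → Tp ⊆ S₁ →
          (∀ t ∈ Wm, BBCompat t ⟨a Tp, b Tp, Tp⟩) → False := by
        intro Tp hTp hTpS₂ hTpS₁ hcompat
        have htriple := hA Tp hTp hTpS₁
        have hnotmem : (⟨a Tp, b Tp, Tp⟩ : BBTriple G) ∉ Wm := fun hmem =>
          hS₂T _ hmem hTpS₂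
        have htower : IsTower N L R S₁ (insert ⟨a Tp, b Tp, Tp⟩ Wm) := by
          constructor
          · intro t ht
            rcases ht with rfl | ht
            · exact ⟨hTp, hTpS₁, haS Tp hTp, htriple.1, hbS Tp hTp, htriple.2⟩
            · exact hWt.1 t ht
          · intro t ht t' ht' hne'
            rcases ht with rfl | ht
            · rcases ht' with rfl | ht'
              · exact absurd rfl hne'
              · exact Or.inr (hcompat t' ht')
            · rcases ht' with rfl | ht'
              · exact Or.inl (hcompat t ht)
              · exact hWt.2 t ht t' ht' hne'
        exact hnotmem (hWm.2 htower (subset_insert _ _) (mem_insert _ _))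
      by_cases h₀ : ∃ t₀ ∈ Wm, ∀ t' ∈ Wm, ¬ BBCompat t₀ t'
      · obtain ⟨t₀, ht₀, ht₀min⟩ := h₀
        obtain ⟨Sx, hSx, hSxlt⟩ := (hWt.1 t₀ ht₀).2.2.2.1
        obtain ⟨Sy, hSy, hSylt⟩ := (hWt.1 t₀ ht₀).2.2.2.2.2
        obtain ⟨C1, hC1, hC11, hC12⟩ := min2 S₂ hS₂ S₁ hS₁
        obtain ⟨C2, hC2, hC21, hC22⟩ := min2 C1 hC1 Sx hSx
        obtain ⟨Tp, hTp, hTp1, hTp2⟩ := min2 C2 hC2 Sy hSy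
        have hTpS₂ : Tp ⊆ S₂ := hTp1.trans (hC21.trans hC11)
        have hTpS₁ : Tp ⊆ S₁ := hTp1.trans (hC21.trans hC12)
        have hTpSx : Tp ⊆ Sx := hTp1.trans hC22
        refine hext Tp hTp hTpS₂ hTpS₁ ?_
        intro t ht
        rcases eq_or_ne t t₀ with rfl | hne'
        · exact ⟨hTpS₂.trans (hS₂sub t ht), fun s hs =>
            ⟨hSxlt s (hTpSx hs), hSylt s (hTp2 hs)⟩⟩
        · rcases hWt.2 t ht t₀ ht₀ hne' with h | h
          · exact ⟨(hTpS₂.trans (hS₂sub t₀ ht₀)).trans h.1, fun s hs =>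
              h.2 s (hTpS₂.trans (hS₂sub t₀ ht₀) hs)⟩
          · exact absurd h (ht₀min t ht)
      · push_neg at h₀
        obtain ⟨Tp, hTp, hTpS₂, hTpS₁⟩ := min2 S₂ hS₂ S₁ hS₁
        refine hext Tp hTp hTpS₂ hTpS₁ ?_
        intro t ht
        obtain ⟨t', ht', hcom⟩ := h₀ t ht
        exact ⟨hTpS₂.trans (hS₂sub t ht), fun s hs =>
          hcom.2 s (hTpS₂.trans (hS₂sub t' ht') hs)⟩
    have hWmne : Wm.Nonempty := by
      obtain ⟨S, hS⟩ := hNe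
      obtain ⟨t, ht, -⟩ := hcofT S hS
      exact ⟨t, ht⟩
    have hnest : IsNest (orderBalls G) {J | ∃ t ∈ Wm, J = Icc t.x t.y} := by
      refine ⟨?_, ?_, ?_⟩
      · obtain ⟨t, ht⟩ := hWmne
        exact ⟨Icc t.x t.y, t, ht, rfl⟩
      · rintro J ⟨t, ht, rfl⟩
        exact ⟨t.x, t.y, (hLltR t.x (hWt.1 t ht).2.2.2.1 t.y (hWt.1 t ht).2.2.2.2.2).le, rfl⟩
      · rintro J ⟨t, ht, rfl⟩ J' ⟨t', ht', rfl⟩ hne'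
        have htne : t ≠ t' := fun h => hne' (by rw [h])
        rcases hWt.2 t ht t' ht' htne with h | h
        · exact Or.inr (Icc_subset_Icc (h.2 t'.x (hWt.1 t' ht').2.2.1).1.le
            (h.2 t'.y (hWt.1 t' ht').2.2.2.2.1).2.le)
        · exact Or.inl (Icc_subset_Icc (h.2 t.x (hWt.1 t ht).2.2.1).1.le
            (h.2 t.y (hWt.1 t ht).2.2.2.2.1).2.le)
    obtain ⟨z, hz⟩ := ho _ hnest
    rcases hLR z with ⟨S, hS, h⟩ | ⟨S, hS, h⟩
    · obtain ⟨t, ht, htS⟩ := hcofT S hS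
      have hzt : z ∈ Icc t.x t.y := hz _ ⟨t, ht, rfl⟩
      exact absurd (h t.x (htS (hWt.1 t ht).2.2.1)) (not_lt.2 hzt.1)
    · obtain ⟨t, ht, htS⟩ := hcofT S hS
      have hzt : z ∈ Icc t.x t.y := hz _ ⟨t, ht, rfl⟩
      exact absurd (h t.y (htS (hWt.1 t ht).2.2.2.2.1)) (not_lt.2 hzt.2)
end
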